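/- arXiv:1908.05083 — 4 statements merged into one kernel-verified Lean document; each statement's English description precedes it below -/
import Mathlib

section
/- For every x ∈ ℝ^{p+q} one has dim 𝔫_x ≥ q(p−1) − (p+q−2); equivalently, every orbit of the nilpotent Iwasawa factor N = exp(𝔫) on ℝ^{p,q} has dimension at most p+q−2, so the natural action of N on ℝ^{p,q} is not of cohomogeneity one. -/
open Matrix

noncomputable section

/-- 1-based standard basis vector `e i` of `ℝ^n` (zero if `i` is out of range). -/
def stdE (n i : ℕ) : Fin n → ℝ := fun j => if (j : ℕ) + 1 = i then 1 else 0

/-- `w i := e_{p-i+1} - e_{p+i}`. -/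
def wVec (p q i : ℕ) : Fin (p + q) → ℝ := stdE (p + q) (p - i + 1) - stdE (p + q) (p + i)

/-- `v i := e_{p-i+1} + e_{p+i}`. -/
def vVec (p q i : ℕ) : Fin (p + q) → ℝ := stdE (p + q) (p - i + 1) + stdE (p + q) (p + i)

/-- The scalar product of signature `(p,q)` on `ℝ^{p+q}`. -/
def ip (p q : ℕ) (x y : Fin (p + q) → ℝ) : ℝ :=
  ∑ i : Fin (p + q), (if (i : ℕ) < p then (1 : ℝ) else -1) * x i * y i

/-- The matrix `J = diag(I_p, -I_q)`. -/
def Jmat (p q : ℕ) : Matrix (Fin (p + q)) (Fin (p + q)) ℝ :=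
  Matrix.diagonal (fun i => if (i : ℕ) < p then (1 : ℝ) else -1)

/-- Entry of a square matrix, with 1-based indices (0 outside the range). -/
def ent {n : ℕ} (X : Matrix (Fin n) (Fin n) ℝ) (i j : ℕ) : ℝ :=
  if h : i - 1 < n ∧ j - 1 < n then X ⟨i - 1, h.1⟩ ⟨j - 1, h.2⟩ else 0

/-- Coordinate of a vector, with 1-based index (0 outside the range). -/
def vent {n : ℕ} (x : Fin n → ℝ) (i : ℕ) : ℝ :=
  if h : i - 1 < n then x ⟨i - 1, h⟩ else 0

lemma ent_zero {n : ℕ} (i j : ℕ) : ent (0 : Matrix (Fin n) (Fin n) ℝ) i j = 0 := by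
  unfold ent; split <;> simp

lemma ent_add {n : ℕ} (X Y : Matrix (Fin n) (Fin n) ℝ) (i j : ℕ) :
    ent (X + Y) i j = ent X i j + ent Y i j := by
  unfold ent; split <;> simp [Matrix.add_apply]

lemma ent_smul {n : ℕ} (c : ℝ) (X : Matrix (Fin n) (Fin n) ℝ) (i j : ℕ) :
    ent (c • X) i j = c * ent X i j := by
  unfold ent; split <;> simp [Matrix.smul_apply]

/-- The Lie algebra `𝔰𝔬(p,q)`, as a set of matrices. -/
def soSet (p q : ℕ) : Set (Matrix (Fin (p + q)) (Fin (p + q)) ℝ) :=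
  {X | Xᵀ * Jmat p q + Jmat p q * X = 0}

lemma soSet_zero (p q : ℕ) : (0 : Matrix (Fin (p + q)) (Fin (p + q)) ℝ) ∈ soSet p q := by
  simp [soSet]

lemma soSet_add (p q : ℕ) {X Y : Matrix (Fin (p + q)) (Fin (p + q)) ℝ}
    (hX : X ∈ soSet p q) (hY : Y ∈ soSet p q) : X + Y ∈ soSet p q := by
  simp only [soSet, Set.mem_setOf_eq] at *
  rw [Matrix.transpose_add, Matrix.add_mul, Matrix.mul_add,
    show Xᵀ * Jmat p q + Yᵀ * Jmat p q + (Jmat p q * X + Jmat p q * Y)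
      = (Xᵀ * Jmat p q + Jmat p q * X) + (Yᵀ * Jmat p q + Jmat p q * Y) by abel,
    hX, hY, add_zero]

lemma soSet_smul (p q : ℕ) (c : ℝ) {X : Matrix (Fin (p + q)) (Fin (p + q)) ℝ}
    (hX : X ∈ soSet p q) : c • X ∈ soSet p q := by
  simp only [soSet, Set.mem_setOf_eq] at *
  rw [Matrix.transpose_smul, Matrix.smul_mul, Matrix.mul_smul, ← smul_add, hX, smul_zero]

/-- The set `𝔭` of symmetric elements of `𝔰𝔬(p,q)` (Cartan decomposition). -/
def pSet (p q : ℕ) : Set (Matrix (Fin (p + q)) (Fin (p + q)) ℝ) :=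
  {X | X ∈ soSet p q ∧ Xᵀ = X}

/-- The nilpotent Iwasawa factor `𝔫`, as a set of matrices; the conditions are the
entry conditions on the blocks `A`, `B`, `D` (1-based indices; `A i j = ent X i j`,
`B i l = ent X i (p + l)`, `D i j = ent X (p + i) (p + j)`). -/
def nSet (p q : ℕ) : Set (Matrix (Fin (p + q)) (Fin (p + q)) ℝ) :=
  {X | X ∈ soSet p q ∧
    (∀ i j, 1 ≤ i → i ≤ p - q → 1 ≤ j → j ≤ p - q → ent X i j = 0) ∧
    (∀ l, 1 ≤ l → l ≤ q → ent X (p - l + 1) (p + l) = 0) ∧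
    (∀ k l, 1 ≤ k → k ≤ p - q → 1 ≤ l → l ≤ q →
      ent X k (p - l + 1) = ent X k (p + l)) ∧
    (∀ i j, 1 ≤ i → i < j → j ≤ q →
      ent X (p + 1 - j) (p + 1 - i) = ent X (p + 1 - j) (p + i)) ∧
    (∀ i j, 1 ≤ i → i < j → j ≤ q →
      ent X (p + i) (p + j) = - ent X (p + 1 - i) (p + j))}

/-- The abelian factor `𝔞`, as a set of matrices: all entries vanish except the
pairs in positions `(p-l+1, p+l)` and `(p+l, p-l+1)`, `1 ≤ l ≤ q`, which are equal. -/
def aSet (p q : ℕ) : Set (Matrix (Fin (p + q)) (Fin (p + q)) ℝ) :=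
  {X | (∀ l, 1 ≤ l → l ≤ q → ent X (p - l + 1) (p + l) = ent X (p + l) (p - l + 1)) ∧
    (∀ i j, 1 ≤ i → i ≤ p + q → 1 ≤ j → j ≤ p + q →
      (¬ ∃ l, 1 ≤ l ∧ l ≤ q ∧ ((i = p - l + 1 ∧ j = p + l) ∨ (i = p + l ∧ j = p - l + 1))) →
      ent X i j = 0)}

/-- `𝔨₀`: skew-symmetric upper-left `(p-q)×(p-q)` block, all other entries zero. -/
def kSet (p q : ℕ) : Set (Matrix (Fin (p + q)) (Fin (p + q)) ℝ) :=
  {X | (∀ i j, 1 ≤ i → i ≤ p - q → 1 ≤ j → j ≤ p - q → ent X i j = - ent X j i) ∧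
    (∀ i j, 1 ≤ i → i ≤ p + q → 1 ≤ j → j ≤ p + q →
      ¬(i ≤ p - q ∧ j ≤ p - q) → ent X i j = 0)}

/-- The nilpotent Iwasawa factor `𝔫` as an `ℝ`-subspace of `M_{p+q}(ℝ)`. -/
def nSub (p q : ℕ) : Submodule ℝ (Matrix (Fin (p + q)) (Fin (p + q)) ℝ) where
  carrier := nSet p q
  zero_mem' := by
    refine ⟨soSet_zero p q, ?_, ?_, ?_, ?_, ?_⟩ <;> intros <;> simp [ent_zero]
  add_mem' := by
    rintro X Y ⟨h0, h1, h2, h3, h4, h5⟩ ⟨g0, g1, g2, g3, g4, g5⟩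
    refine ⟨soSet_add p q h0 g0, ?_, ?_, ?_, ?_, ?_⟩
    · intro i j hi hi' hj hj'
      rw [ent_add, h1 i j hi hi' hj hj', g1 i j hi hi' hj hj', add_zero]
    · intro l hl hl'
      rw [ent_add, h2 l hl hl', g2 l hl hl', add_zero]
    · intro k l hk hk' hl hl'
      rw [ent_add, ent_add, h3 k l hk hk' hl hl', g3 k l hk hk' hl hl']
    · intro i j hi hij hj
      rw [ent_add, ent_add, h4 i j hi hij hj, g4 i j hi hij hj]
    · intro i j hi hij hj
      rw [ent_add, ent_add, h5 i j hi hij hj, g5 i j hi hij hj]; ring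
  smul_mem' := by
    rintro c X ⟨h0, h1, h2, h3, h4, h5⟩
    refine ⟨soSet_smul p q c h0, ?_, ?_, ?_, ?_, ?_⟩
    · intro i j hi hi' hj hj'
      rw [ent_smul, h1 i j hi hi' hj hj', mul_zero]
    · intro l hl hl'
      rw [ent_smul, h2 l hl hl', mul_zero]
    · intro k l hk hk' hl hl'
      rw [ent_smul, ent_smul, h3 k l hk hk' hl hl']
    · intro i j hi hij hj
      rw [ent_smul, ent_smul, h4 i j hi hij hj]
    · intro i j hi hij hj
      rw [ent_smul, ent_smul, h5 i j hi hij hj]; ring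

/-- The abelian factor `𝔞` as an `ℝ`-subspace of `M_{p+q}(ℝ)`. -/
def aSub (p q : ℕ) : Submodule ℝ (Matrix (Fin (p + q)) (Fin (p + q)) ℝ) where
  carrier := aSet p q
  zero_mem' := by
    refine ⟨?_, ?_⟩ <;> intros <;> simp [ent_zero]
  add_mem' := by
    rintro X Y ⟨h1, h2⟩ ⟨g1, g2⟩
    refine ⟨?_, ?_⟩
    · intro l hl hl'
      rw [ent_add, ent_add, h1 l hl hl', g1 l hl hl']
    · intro i j hi hi' hj hj' hne
      rw [ent_add, h2 i j hi hi' hj hj' hne, g2 i j hi hi' hj hj' hne, add_zero]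
  smul_mem' := by
    rintro c X ⟨h1, h2⟩
    refine ⟨?_, ?_⟩
    · intro l hl hl'
      rw [ent_smul, ent_smul, h1 l hl hl']
    · intro i j hi hi' hj hj' hne
      rw [ent_smul, h2 i j hi hi' hj hj' hne, mul_zero]

/-- `𝔨₀` as an `ℝ`-subspace of `M_{p+q}(ℝ)`. -/
def kSub (p q : ℕ) : Submodule ℝ (Matrix (Fin (p + q)) (Fin (p + q)) ℝ) where
  carrier := kSet p q
  zero_mem' := by
    refine ⟨?_, ?_⟩ <;> intros <;> simp [ent_zero]
  add_mem' := by
    rintro X Y ⟨h1, h2⟩ ⟨g1, g2⟩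
    refine ⟨?_, ?_⟩
    · intro i j hi hi' hj hj'
      rw [ent_add, ent_add, h1 i j hi hi' hj hj', g1 i j hi hi' hj hj']; ring
    · intro i j hi hi' hj hj' hne
      rw [ent_add, h2 i j hi hi' hj hj' hne, g2 i j hi hi' hj hj' hne, add_zero]
  smul_mem' := by
    rintro c X ⟨h1, h2⟩
    refine ⟨?_, ?_⟩
    · intro i j hi hi' hj hj'
      rw [ent_smul, ent_smul, h1 i j hi hi' hj hj']; ring
    · intro i j hi hi' hj hj' hne
      rw [ent_smul, h2 i j hi hi' hj hj' hne, mul_zero]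

/-- The subspace `{X ∈ M_n(ℝ) : X x = 0}`. -/
def kerAt {n : ℕ} (x : Fin n → ℝ) : Submodule ℝ (Matrix (Fin n) (Fin n) ℝ) where
  carrier := {X | X *ᵥ x = 0}
  zero_mem' := by simp [Matrix.zero_mulVec]
  add_mem' := by
    intro X Y hX hY
    simp only [Set.mem_setOf_eq] at *
    rw [Matrix.add_mulVec, hX, hY, add_zero]
  smul_mem' := by
    intro c X hX
    simp only [Set.mem_setOf_eq] at *
    rw [Matrix.smul_mulVec, hX, smul_zero]

/-- The exponential of a matrix, as a unit of `M_n(ℝ)`, i.e. an element of `GL(n, ℝ)`. -/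
def expUnit {n : ℕ} (X : Matrix (Fin n) (Fin n) ℝ) : (Matrix (Fin n) (Fin n) ℝ)ˣ where
  val := NormedSpace.exp X
  inv := NormedSpace.exp (-X)
  val_inv := by
    rw [← Matrix.exp_add_of_commute X (-X) (Commute.neg_right (Commute.refl X)),
      add_neg_cancel, NormedSpace.exp_zero]
  inv_val := by
    rw [← Matrix.exp_add_of_commute (-X) X (Commute.neg_left (Commute.refl X)),
      neg_add_cancel, NormedSpace.exp_zero]

/-- The subgroup `N = exp(𝔫)` of `GL(p+q, ℝ)` generated by exponentials of elements of `𝔫`. -/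
def Ngrp (p q : ℕ) : Subgroup (Matrix (Fin (p + q)) (Fin (p + q)) ℝ)ˣ :=
  Subgroup.closure {g | ∃ X ∈ nSet p q, g = expUnit X}

/-- The subgroup `AN` of `GL(p+q, ℝ)` generated by exponentials of elements of `𝔞 ∪ 𝔫`. -/
def ANgrp (p q : ℕ) : Subgroup (Matrix (Fin (p + q)) (Fin (p + q)) ℝ)ˣ :=
  Subgroup.closure {g | ∃ X ∈ aSet p q ∪ nSet p q, g = expUnit X}

/-- The subgroup `Q = K₀AN` of `GL(p+q, ℝ)` generated by exponentials of `𝔨₀ ∪ 𝔞 ∪ 𝔫`. -/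
def Qgrp (p q : ℕ) : Subgroup (Matrix (Fin (p + q)) (Fin (p + q)) ℝ)ˣ :=
  Subgroup.closure {g | ∃ X ∈ kSet p q ∪ aSet p q ∪ nSet p q, g = expUnit X}

/-- The orbit `G(x)` of a point `x ∈ ℝ^n` under a subgroup `G` of `GL(n, ℝ)`. -/
def orb {n : ℕ} (G : Subgroup (Matrix (Fin n) (Fin n) ℝ)ˣ) (x : Fin n → ℝ) :
    Set (Fin n → ℝ) :=
  {v | ∃ g ∈ G, (g : Matrix (Fin n) (Fin n) ℝ) *ᵥ x = v}

end

noncomputable section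

lemma ent_fin {n : ℕ} (X : Matrix (Fin n) (Fin n) ℝ) (a b : ℕ) (ha : a - 1 < n) (hb : b - 1 < n) :
    ent X a b = X ⟨a - 1, ha⟩ ⟨b - 1, hb⟩ := dif_pos ⟨ha, hb⟩

lemma so_rel {p q : ℕ} {X : Matrix (Fin (p + q)) (Fin (p + q)) ℝ} (hX : X ∈ soSet p q)
    (a b : Fin (p + q)) :
    X b a * (if (b : ℕ) < p then (1 : ℝ) else -1)
      + (if (a : ℕ) < p then (1 : ℝ) else -1) * X a b = 0 := by
  have h := congrFun (congrFun hX a) b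
  simpa [Jmat, Matrix.add_apply, Matrix.mul_diagonal, Matrix.diagonal_mul,
    Matrix.transpose_apply] using h

lemma so_of_rel {p q : ℕ} {X : Matrix (Fin (p + q)) (Fin (p + q)) ℝ}
    (h : ∀ a b : Fin (p + q), X b a * (if (b : ℕ) < p then (1 : ℝ) else -1)
      + (if (a : ℕ) < p then (1 : ℝ) else -1) * X a b = 0) : X ∈ soSet p q := by
  show _ = _
  ext a b
  have := h a b
  simpa [Jmat, Matrix.add_apply, Matrix.mul_diagonal, Matrix.diagonal_mul,
    Matrix.transpose_apply] using this

def MA (p q r0 l0 : ℕ) : Matrix (Fin (p + q)) (Fin (p + q)) ℝ :=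
  Matrix.of fun i j =>
    (if (i : ℕ) = r0 ∧ ((j : ℕ) = p - 1 - l0 ∨ (j : ℕ) = p + l0) then (1 : ℝ) else 0)
    + (if (i : ℕ) = p + l0 ∧ (j : ℕ) = r0 then 1 else 0)
    - (if (i : ℕ) = p - 1 - l0 ∧ (j : ℕ) = r0 then 1 else 0)

def MD (p q r0 l0 : ℕ) : Matrix (Fin (p + q)) (Fin (p + q)) ℝ :=
  Matrix.of fun i j =>
    (if (i : ℕ) = p + l0 ∧ ((j : ℕ) = r0 ∨ (j : ℕ) = 2 * p - 1 - r0) then (1 : ℝ) else 0)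
    + (if (i : ℕ) = r0 ∧ (j : ℕ) = p + l0 then 1 else 0)
    - (if (i : ℕ) = 2 * p - 1 - r0 ∧ (j : ℕ) = p + l0 then 1 else 0)

set_option maxHeartbeats 2000000 in
lemma MA_mem (p q r0 l0 : ℕ) (hq : 1 ≤ q) (hpq : q ≤ p) (hl : l0 < q)
    (hc : r0 + l0 + 1 < p) : MA p q r0 l0 ∈ nSet p q := by
  refine ⟨so_of_rel ?_, ?_, ?_, ?_, ?_, ?_⟩
  · intro a b
    have hA : (a : ℕ) < p + q := a.isLt
    have hB : (b : ℕ) < p + q := b.isLt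
    simp only [MA, Matrix.of_apply]
    split_ifs <;> first | (exfalso; omega) | norm_num
  · intro i j h1 h2 h3 h4
    rw [ent_fin _ i j (by omega) (by omega)]
    simp only [MA, Matrix.of_apply]
    split_ifs <;> first | (exfalso; omega) | norm_num
  · intro l h1 h2
    rw [ent_fin _ (p - l + 1) (p + l) (by omega) (by omega)]
    simp only [MA, Matrix.of_apply]
    split_ifs <;> first | (exfalso; omega) | norm_num
  · intro k l h1 h2 h3 h4
    rw [ent_fin _ k (p - l + 1) (by omega) (by omega),
      ent_fin _ k (p + l) (by omega) (by omega)]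
    simp only [MA, Matrix.of_apply]
    split_ifs <;> first | (exfalso; omega) | norm_num
  · intro i j h1 h2 h3
    rw [ent_fin _ (p + 1 - j) (p + 1 - i) (by omega) (by omega),
      ent_fin _ (p + 1 - j) (p + i) (by omega) (by omega)]
    simp only [MA, Matrix.of_apply]
    split_ifs <;> first | (exfalso; omega) | norm_num
  · intro i j h1 h2 h3
    rw [ent_fin _ (p + i) (p + j) (by omega) (by omega),
      ent_fin _ (p + 1 - i) (p + j) (by omega) (by omega)]
    simp only [MA, Matrix.of_apply]
    split_ifs <;> first | (exfalso; omega) | norm_num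

set_option maxHeartbeats 2000000 in
lemma MD_mem (p q r0 l0 : ℕ) (hq : 1 ≤ q) (hpq : q ≤ p) (hr : r0 < p) (hl : l0 < q)
    (hc : p < r0 + l0 + 1) : MD p q r0 l0 ∈ nSet p q := by
  refine ⟨so_of_rel ?_, ?_, ?_, ?_, ?_, ?_⟩
  · intro a b
    have hA : (a : ℕ) < p + q := a.isLt
    have hB : (b : ℕ) < p + q := b.isLt
    simp only [MD, Matrix.of_apply]
    split_ifs <;> first | (exfalso; omega) | norm_num
  · intro i j h1 h2 h3 h4
    rw [ent_fin _ i j (by omega) (by omega)]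
    simp only [MD, Matrix.of_apply]
    split_ifs <;> first | (exfalso; omega) | norm_num
  · intro l h1 h2
    rw [ent_fin _ (p - l + 1) (p + l) (by omega) (by omega)]
    simp only [MD, Matrix.of_apply]
    split_ifs <;> first | (exfalso; omega) | norm_num
  · intro k l h1 h2 h3 h4
    rw [ent_fin _ k (p - l + 1) (by omega) (by omega),
      ent_fin _ k (p + l) (by omega) (by omega)]
    simp only [MD, Matrix.of_apply]
    split_ifs <;> first | (exfalso; omega) | norm_num
  · intro i j h1 h2 h3
    rw [ent_fin _ (p + 1 - j) (p + 1 - i) (by omega) (by omega),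
      ent_fin _ (p + 1 - j) (p + i) (by omega) (by omega)]
    simp only [MD, Matrix.of_apply]
    split_ifs <;> first | (exfalso; omega) | norm_num
  · intro i j h1 h2 h3
    rw [ent_fin _ (p + i) (p + j) (by omega) (by omega),
      ent_fin _ (p + 1 - i) (p + j) (by omega) (by omega)]
    simp only [MD, Matrix.of_apply]
    split_ifs <;> first | (exfalso; omega) | norm_num

lemma rowFact {p q : ℕ} (hq : 1 ≤ q) (hpq : q ≤ p)
    {X : Matrix (Fin (p + q)) (Fin (p + q)) ℝ} (hX : X ∈ nSet p q) (j : Fin (p + q)) :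
    X ⟨p - 1, by omega⟩ j + X ⟨p, by omega⟩ j = 0 := by
  obtain ⟨hso, h1, h2, h3, h4, h5⟩ := hX
  obtain ⟨Jn, hJ⟩ := j
  rcases lt_trichotomy Jn (p - 1) with hc | hc | hc
  · -- column with 1-based index Jn+1 ≤ p-1 : get X ⟨Jn⟩ ⟨p-1⟩ = X ⟨Jn⟩ ⟨p⟩
    have hcols : X ⟨Jn, hJ⟩ ⟨p - 1, by omega⟩ = X ⟨Jn, hJ⟩ ⟨p, by omega⟩ := by
      by_cases hcase : Jn + 1 ≤ p - q
      · have h := h3 (Jn + 1) 1 (by omega) (by omega) (by omega) hq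
        rw [show p - 1 + 1 = p by omega] at h
        rw [ent_fin _ (Jn + 1) p (by omega) (by omega),
          ent_fin _ (Jn + 1) (p + 1) (by omega) (by omega)] at h
        simpa [Nat.add_sub_cancel] using h
      · have h := h4 1 (p - Jn) (by omega) (by omega) (by omega)
        rw [show p + 1 - (p - Jn) = Jn + 1 by omega, show p + 1 - 1 = p by omega] at h
        rw [ent_fin _ (Jn + 1) p (by omega) (by omega),
          ent_fin _ (Jn + 1) (p + 1) (by omega) (by omega)] at h
        simpa [Nat.add_sub_cancel] using h
    have r1 := so_rel hso ⟨Jn, hJ⟩ ⟨p - 1, by omega⟩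
    have r2 := so_rel hso ⟨Jn, hJ⟩ ⟨p, by omega⟩
    rw [if_pos (show p - 1 < p by omega), if_pos (show Jn < p by omega)] at r1
    rw [if_neg (show ¬ p < p by omega), if_pos (show Jn < p by omega)] at r2
    linarith
  · -- Jn = p - 1
    subst hc
    have r := so_rel hso ⟨p - 1, by omega⟩ ⟨p - 1, by omega⟩
    rw [if_pos (show p - 1 < p by omega)] at r
    have h2' := h2 1 le_rfl hq
    rw [show p - 1 + 1 = p by omega] at h2'
    rw [ent_fin _ p (p + 1) (by omega) (by omega)] at h2'
    have h2'' : X ⟨p - 1, by omega⟩ ⟨p, by omega⟩ = 0 := h2'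
    have r2 := so_rel hso ⟨p - 1, by omega⟩ ⟨p, by omega⟩
    rw [if_neg (show ¬ p < p by omega), if_pos (show p - 1 < p by omega)] at r2
    linarith
  · -- Jn ≥ p
    by_cases he : Jn = p
    · have hgoal : (⟨Jn, hJ⟩ : Fin (p + q)) = ⟨p, by omega⟩ := Fin.ext he
      rw [hgoal]
      have h2' := h2 1 le_rfl hq
      rw [show p - 1 + 1 = p by omega] at h2'
      rw [ent_fin _ p (p + 1) (by omega) (by omega)] at h2'
      have h2'' : X ⟨p - 1, by omega⟩ ⟨p, by omega⟩ = 0 := h2'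
      have r := so_rel hso ⟨p, by omega⟩ ⟨p, by omega⟩
      rw [if_neg (show ¬ p < p by omega)] at r
      linarith
    · -- 1-based column p+l with l = Jn - p + 1 ≥ 2
      have h5' := h5 1 (Jn - p + 1) le_rfl (by omega) (by omega)
      rw [show p + 1 - 1 = p by omega, show p + (Jn - p + 1) = Jn + 1 by omega] at h5'
      rw [ent_fin _ (p + 1) (Jn + 1) (by omega) (by omega),
        ent_fin _ p (Jn + 1) (by omega) (by omega)] at h5'
      simp only [Nat.add_sub_cancel] at h5'
      linarith

lemma colFact {p q : ℕ} (hq : 1 ≤ q) (hpq : q ≤ p)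
    {X : Matrix (Fin (p + q)) (Fin (p + q)) ℝ} (hX : X ∈ nSet p q) (i : Fin (p + q)) :
    X i ⟨p - 1, by omega⟩ = X i ⟨p, by omega⟩ := by
  have r1 := so_rel hX.1 i ⟨p - 1, by omega⟩
  have r2 := so_rel hX.1 i ⟨p, by omega⟩
  rw [if_pos (show p - 1 < p by omega)] at r1
  rw [if_neg (show ¬ p < p by omega)] at r2
  have hr := rowFact hq hpq hX i
  by_cases hi : (i : ℕ) < p
  · rw [if_pos hi] at r1 r2; linarith
  · rw [if_neg hi] at r1 r2; linarith

lemma f1_vanish {p q : ℕ} {X : Matrix (Fin (p + q)) (Fin (p + q)) ℝ} (hX : X ∈ soSet p q)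
    (x : Fin (p + q) → ℝ) :
    ∑ i : Fin (p + q), ((if (i : ℕ) < p then (1 : ℝ) else -1) * x i) * (X *ᵥ x) i = 0 := by
  have hS : ∑ i : Fin (p + q), ((if (i : ℕ) < p then (1 : ℝ) else -1) * x i) * (X *ᵥ x) i
      = ∑ i : Fin (p + q), ∑ j : Fin (p + q), ((if (i : ℕ) < p then (1 : ℝ) else -1) * x i) * (X i j * x j) := by
    refine Finset.sum_congr rfl fun i _ => ?_
    simp [Matrix.mulVec, dotProduct, Finset.mul_sum]
  rw [hS]
  have hpt : ∀ i j : Fin (p + q),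
      ((if (i : ℕ) < p then (1 : ℝ) else -1) * x i) * (X i j * x j)
      = -(((if (j : ℕ) < p then (1 : ℝ) else -1) * x j) * (X j i * x i)) := by
    intro i j
    have h := so_rel hX i j
    have h' : (if (i : ℕ) < p then (1:ℝ) else -1) * X i j
        = -((if (j : ℕ) < p then (1:ℝ) else -1) * X j i) := by linarith
    calc ((if (i : ℕ) < p then (1 : ℝ) else -1) * x i) * (X i j * x j)
        = ((if (i : ℕ) < p then (1 : ℝ) else -1) * X i j) * (x i * x j) := by ring
      _ = -(((if (j : ℕ) < p then (1:ℝ) else -1) * X j i)) * (x i * x j) := by rw [h']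
      _ = -(((if (j : ℕ) < p then (1 : ℝ) else -1) * x j) * (X j i * x i)) := by ring
  have h2 : ∑ i : Fin (p + q), ∑ j : Fin (p + q), ((if (i : ℕ) < p then (1 : ℝ) else -1) * x i) * (X i j * x j)
      = -∑ i : Fin (p + q), ∑ j : Fin (p + q), ((if (i : ℕ) < p then (1 : ℝ) else -1) * x i) * (X i j * x j) := by
    calc ∑ i : Fin (p + q), ∑ j : Fin (p + q), ((if (i : ℕ) < p then (1 : ℝ) else -1) * x i) * (X i j * x j)
        = ∑ i : Fin (p + q), ∑ j : Fin (p + q), -(((if (j : ℕ) < p then (1 : ℝ) else -1) * x j) * (X j i * x i)) := by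
          exact Finset.sum_congr rfl fun i _ => Finset.sum_congr rfl fun j _ => hpt i j
      _ = -∑ i : Fin (p + q), ∑ j : Fin (p + q), ((if (j : ℕ) < p then (1 : ℝ) else -1) * x j) * (X j i * x i) := by
          simp
      _ = -∑ j : Fin (p + q), ∑ i : Fin (p + q), ((if (j : ℕ) < p then (1 : ℝ) else -1) * x j) * (X j i * x i) := by
          rw [Finset.sum_comm]
  linarith

/-- row index used for the basis matrix indexed by `(l, t)` (0-based). -/
def rho (p l0 t : ℕ) : ℕ := if t < p - 1 - l0 then t else t + 1

def Mmat (p q : ℕ) (l : Fin q) (t : Fin (p - 1)) : Matrix (Fin (p + q)) (Fin (p + q)) ℝ :=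
  if (t : ℕ) < p - 1 - (l : ℕ) then MA p q (t : ℕ) (l : ℕ) else MD p q ((t : ℕ) + 1) (l : ℕ)

lemma Mmat_mem (p q : ℕ) (hq : 1 ≤ q) (hpq : q ≤ p) (l : Fin q) (t : Fin (p - 1)) :
    Mmat p q l t ∈ nSet p q := by
  have hl : (l : ℕ) < q := l.isLt
  have ht : (t : ℕ) < p - 1 := t.isLt
  unfold Mmat
  split_ifs with h
  · exact MA_mem p q _ _ hq hpq hl (by omega)
  · exact MD_mem p q _ _ hq hpq (by omega) hl (by omega)

lemma Mmat_sig (p q : ℕ) (hq : 1 ≤ q) (hpq : q ≤ p) (l l' : Fin q) (t t' : Fin (p - 1)) :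
    Mmat p q l' t' ⟨rho p (l : ℕ) (t : ℕ), by unfold rho; split <;> omega⟩
      ⟨p + (l : ℕ), by omega⟩ = if l' = l ∧ t' = t then 1 else 0 := by
  have hl : (l : ℕ) < q := l.isLt
  have ht : (t : ℕ) < p - 1 := t.isLt
  have hl' : (l' : ℕ) < q := l'.isLt
  have ht' : (t' : ℕ) < p - 1 := t'.isLt
  simp only [Fin.ext_iff]
  unfold Mmat rho
  split_ifs <;>
    simp only [MA, MD, Matrix.of_apply] <;>
    split_ifs <;> first | (exfalso; omega) | norm_num | omega | rfl

lemma nSub_dim_lower (p q : ℕ) (hq : 1 ≤ q) (hpq : q ≤ p) :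
    q * (p - 1) ≤ Module.finrank ℝ ↥(nSub p q) := by
  classical
  set ι := Fin q × Fin (p - 1)
  have hind0 : LinearIndependent ℝ (fun i : ι => Mmat p q i.1 i.2) := by
    rw [Fintype.linearIndependent_iff]
    intro g hg i
    obtain ⟨l, t⟩ := i
    have h := congrFun (congrFun hg ⟨rho p (l : ℕ) (t : ℕ), by unfold rho; split <;> omega⟩)
      ⟨p + (l : ℕ), by omega⟩
    rw [Matrix.sum_apply] at h
    simp only [Matrix.smul_apply, smul_eq_mul, Matrix.zero_apply] at h
    have h2 : (∑ i : ι, g i * (if i.1 = l ∧ i.2 = t then (1:ℝ) else 0)) = 0 := by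
      calc (∑ i : ι, g i * (if i.1 = l ∧ i.2 = t then (1:ℝ) else 0))
          = ∑ i : ι, g i * Mmat p q i.1 i.2
              ⟨rho p (l : ℕ) (t : ℕ), by unfold rho; split <;> omega⟩ ⟨p + (l : ℕ), by omega⟩ :=
            Finset.sum_congr rfl fun i _ => by rw [Mmat_sig p q hq hpq l i.1 t i.2]
        _ = 0 := h
    have h3 : (∑ i : ι, g i * (if i.1 = l ∧ i.2 = t then (1:ℝ) else 0)) = g (l, t) := by
      rw [Finset.sum_eq_single ((l, t) : ι)]
      · simp
      · intro b _ hb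
        have hnb : ¬(b.1 = l ∧ b.2 = t) := by
          rintro ⟨u, v⟩; exact hb (Prod.ext u v)
        simp [hnb]
      · intro hmem; exact absurd (Finset.mem_univ _) hmem
    rw [h3] at h2
    exact h2
  have hind : LinearIndependent ℝ
      (fun i : ι => (⟨Mmat p q i.1 i.2, Mmat_mem p q hq hpq i.1 i.2⟩ : ↥(nSub p q))) := by
    apply LinearIndependent.of_comp (nSub p q).subtype
    exact hind0
  have := hind.fintype_card_le_finrank
  simpa [ι, Fintype.card_prod] using this

lemma nKill {p q : ℕ} (hq : 1 ≤ q) (hpq : q ≤ p) (x : Fin (p + q) → ℝ)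
    (h1 : ∀ i : Fin (p + q), (i : ℕ) ≠ p - 1 → (i : ℕ) ≠ p → x i = 0)
    (h2 : x ⟨p, by omega⟩ = - x ⟨p - 1, by omega⟩)
    {X : Matrix (Fin (p + q)) (Fin (p + q)) ℝ} (hX : X ∈ nSet p q) :
    X *ᵥ x = 0 := by
  classical
  set iP : Fin (p + q) := ⟨p - 1, by omega⟩ with hiP
  set iQ : Fin (p + q) := ⟨p, by omega⟩ with hiQ
  have hPQ : iP ≠ iQ := by simp only [hiP, hiQ, ne_eq, Fin.mk.injEq]; omega
  set w : Fin (p + q) → ℝ := fun j => (if j = iP then 1 else 0) - (if j = iQ then 1 else 0)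
    with hw
  have hx : x = x iP • w := by
    funext j
    by_cases hP : j = iP
    · subst hP; simp [w, hPQ]
    · by_cases hQ : j = iQ
      · rw [hQ, show x iQ = - x iP from h2]
        simp [w, hPQ.symm]
      · have hj0 : x j = 0 := by
          apply h1 <;> simp only [hiP, hiQ, ne_eq, Fin.ext_iff] at hP hQ ⊢ <;> simpa
        simp [w, hP, hQ, hj0]
  rw [hx, Matrix.mulVec_smul]
  have hcol : X *ᵥ w = 0 := by
    funext i
    simp only [Matrix.mulVec, dotProduct, w, Pi.zero_apply]
    have hsplit : ∀ j : Fin (p + q),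
        X i j * ((if j = iP then (1:ℝ) else 0) - (if j = iQ then 1 else 0))
        = (if j = iP then X i j else 0) - (if j = iQ then X i j else 0) := by
      intro j; split_ifs <;> ring
    rw [Finset.sum_congr rfl fun j _ => hsplit j, Finset.sum_sub_distrib,
      Finset.sum_ite_eq' Finset.univ iP, Finset.sum_ite_eq' Finset.univ iQ]
    simp only [Finset.mem_univ, if_true]
    exact sub_eq_zero.mpr (colFact hq hpq hX i)
  rw [hcol, smul_zero]

end


set_option maxHeartbeats 1000000 in
/-- For every `x ∈ ℝ^{p+q}` one has `dim 𝔫_x ≥ q(p-1) - (p+q-2)`;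
equivalently, every orbit of `N = exp 𝔫` has dimension `dim 𝔫 - dim 𝔫_x ≤ p+q-2`,
so the action of `N` on `ℝ^{p,q}` is not of cohomogeneity one. -/
theorem nSub_stabilizer_dim_ge (p q : ℕ) (hq : 1 ≤ q) (hpq : q ≤ p)
    (x : Fin (p + q) → ℝ) :
    q * (p - 1) - (p + q - 2) ≤ Module.finrank ℝ ↥(nSub p q ⊓ kerAt x) ∧
    Module.finrank ℝ ↥(nSub p q) - Module.finrank ℝ ↥(nSub p q ⊓ kerAt x) ≤ p + q - 2 := by
  classical
  set N := nSub p q with hN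
  have hNdim : q * (p - 1) ≤ Module.finrank ℝ ↥N := nSub_dim_lower p q hq hpq
  set iP : Fin (p + q) := ⟨p - 1, by omega⟩ with hiP
  set iQ : Fin (p + q) := ⟨p, by omega⟩ with hiQ
  -- the evaluation linear map
  set L : Matrix (Fin (p + q)) (Fin (p + q)) ℝ →ₗ[ℝ] (Fin (p + q) → ℝ) :=
    { toFun := fun X => X *ᵥ x
      map_add' := fun X Y => Matrix.add_mulVec X Y x
      map_smul' := fun c X => Matrix.smul_mulVec c X x } with hL
  have hkerAt : kerAt x = LinearMap.ker L := by
    ext X; constructor <;> intro h <;> exact h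
  set L' := L.domRestrict N with hL'
  have hrn := LinearMap.finrank_range_add_finrank_ker L'
  have hkereq : Module.finrank ℝ ↥(LinearMap.ker L') = Module.finrank ℝ ↥(N ⊓ kerAt x) := by
    rw [LinearMap.ker_domRestrict, ← hkerAt]
    have hc : Submodule.comap N.subtype (kerAt x) = Submodule.comap N.subtype (N ⊓ kerAt x) := by
      rw [Submodule.comap_inf, Submodule.comap_subtype_self, top_inf_eq]
    rw [hc]
    exact (Submodule.comapSubtypeEquivOfLe inf_le_left).finrank_eq
  by_cases hsp : (∀ i : Fin (p + q), (i : ℕ) ≠ p - 1 → (i : ℕ) ≠ p → x i = 0)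
      ∧ x iQ = - x iP
  · -- 𝔫 kills x
    have hNK : N ⊓ kerAt x = N := by
      refine le_antisymm inf_le_left (le_inf le_rfl ?_)
      intro X hXN
      exact nKill hq hpq x hsp.1 hsp.2 hXN
    rw [hNK]
    constructor
    · exact le_trans (Nat.sub_le _ _) hNdim
    · simp
  · -- generic case: two independent functionals kill the orbit directions
    set f1 : (Fin (p + q) → ℝ) →ₗ[ℝ] ℝ :=
      ∑ i : Fin (p + q), ((if (i : ℕ) < p then (1:ℝ) else -1) * x i) • LinearMap.proj i
      with hf1
    set f2 : (Fin (p + q) → ℝ) →ₗ[ℝ] ℝ :=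
      (LinearMap.proj iP : (Fin (p + q) → ℝ) →ₗ[ℝ] ℝ) + LinearMap.proj iQ with hf2
    have hf1app : ∀ v, f1 v = ∑ i : Fin (p + q), ((if (i : ℕ) < p then (1:ℝ) else -1) * x i) * v i := by
      intro v
      rw [hf1]
      rw [LinearMap.sum_apply]
      exact Finset.sum_congr rfl fun i _ => rfl
    have hf2app : ∀ v, f2 v = v iP + v iQ := fun v => rfl
    -- a vector in ker f2 where f1 doesn't vanish
    have hPQ : iP ≠ iQ := by simp only [hiP, hiQ, ne_eq, Fin.mk.injEq]; omega
    obtain ⟨v0, hv02, hv01⟩ : ∃ v0, f2 v0 = 0 ∧ f1 v0 ≠ 0 := by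
      by_cases hA : ∀ i : Fin (p + q), (i : ℕ) ≠ p - 1 → (i : ℕ) ≠ p → x i = 0
      · have hB : x iQ ≠ - x iP := fun hc => hsp ⟨hA, hc⟩
        refine ⟨(fun j => (if j = iP then 1 else 0) - (if j = iQ then 1 else 0)), ?_, ?_⟩
        · rw [hf2app]; simp [hPQ, hPQ.symm]
        · rw [hf1app]
          have hsum : ∀ i : Fin (p + q),
              ((if (i : ℕ) < p then (1:ℝ) else -1) * x i) *
                ((if i = iP then (1:ℝ) else 0) - (if i = iQ then 1 else 0))
              = (if i = iP then ((if (i : ℕ) < p then (1:ℝ) else -1) * x i) else 0)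
                - (if i = iQ then ((if (i : ℕ) < p then (1:ℝ) else -1) * x i) else 0) := by
            intro i; split_ifs <;> ring
          rw [Finset.sum_congr rfl fun i _ => hsum i, Finset.sum_sub_distrib,
            Finset.sum_ite_eq' Finset.univ iP, Finset.sum_ite_eq' Finset.univ iQ]
          simp only [Finset.mem_univ, if_true]
          rw [if_pos (show (iP : ℕ) < p by simp [hiP]; omega),
            if_neg (show ¬ (iQ : ℕ) < p by simp [hiQ])]
          intro hc
          apply hB
          have : x iP + x iQ = 0 := by linarith
          linarith
      · push_neg at hA
        obtain ⟨i0, hi1, hi2, hx0⟩ := hA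
        refine ⟨(fun j => if j = i0 then 1 else 0), ?_, ?_⟩
        · rw [hf2app]
          rw [if_neg (fun hc => hi1 (by rw [← hc])), if_neg (fun hc => hi2 (by rw [← hc]))]
          ring
        · rw [hf1app]
          have hsum : ∀ i : Fin (p + q),
              ((if (i : ℕ) < p then (1:ℝ) else -1) * x i) * (if i = i0 then (1:ℝ) else 0)
              = (if i = i0 then ((if (i : ℕ) < p then (1:ℝ) else -1) * x i) else 0) := by
            intro i; split_ifs <;> ring
          rw [Finset.sum_congr rfl fun i _ => hsum i, Finset.sum_ite_eq' Finset.univ i0]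
          simp only [Finset.mem_univ, if_true]
          split_ifs <;> simpa
    -- the witness with f2 = 1
    set w0 : Fin (p + q) → ℝ := fun j => if j = iP then 1 else 0 with hw0
    have hw02 : f2 w0 = 1 := by
      rw [hf2app, hw0]; simp [hPQ.symm]
    -- the combined functional is surjective
    set g : (Fin (p + q) → ℝ) →ₗ[ℝ] ℝ × ℝ := f1.prod f2 with hg
    have hrange_g : LinearMap.range g = ⊤ := by
      rw [eq_top_iff]
      rintro ⟨a, b⟩ -
      refine ⟨b • w0 + ((a - b * f1 w0) / f1 v0) • v0, ?_⟩
      have : g (b • w0 + ((a - b * f1 w0) / f1 v0) • v0)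
          = (f1 (b • w0 + ((a - b * f1 w0) / f1 v0) • v0),
             f2 (b • w0 + ((a - b * f1 w0) / f1 v0) • v0)) := rfl
      rw [this]
      have e1 : f1 (b • w0 + ((a - b * f1 w0) / f1 v0) • v0) = a := by
        rw [map_add, _root_.map_smul, _root_.map_smul, smul_eq_mul, smul_eq_mul]
        field_simp
        ring
      have e2 : f2 (b • w0 + ((a - b * f1 w0) / f1 v0) • v0) = b := by
        rw [map_add, _root_.map_smul, _root_.map_smul, smul_eq_mul, smul_eq_mul, hv02, hw02]
        ring
      rw [e1, e2]
    have hrank_g : Module.finrank ℝ ↥(LinearMap.range g) = 2 := by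
      rw [hrange_g, finrank_top]
      simp
    have hg_rn := LinearMap.finrank_range_add_finrank_ker g
    rw [hrank_g, Module.finrank_fin_fun] at hg_rn
    -- the range of L' is inside ker g
    have hWle : LinearMap.range L' ≤ LinearMap.ker g := by
      rintro y ⟨⟨X, hXN⟩, rfl⟩
      have hXn : X ∈ nSet p q := hXN
      have hy : L' ⟨X, hXN⟩ = X *ᵥ x := rfl
      rw [LinearMap.mem_ker, hy]
      have hz1 : f1 (X *ᵥ x) = 0 := by
        rw [hf1app]
        exact f1_vanish hXn.1 x
      have hz2 : f2 (X *ᵥ x) = 0 := by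
        rw [hf2app]
        have h1 : (X *ᵥ x) iP = ∑ j : Fin (p + q), X iP j * x j := rfl
        have h2 : (X *ᵥ x) iQ = ∑ j : Fin (p + q), X iQ j * x j := rfl
        rw [h1, h2, ← Finset.sum_add_distrib]
        apply Finset.sum_eq_zero
        intro j _
        have hr : X iP j + X iQ j = 0 := rowFact hq hpq hXn j
        have hx2 : X iP j * x j + X iQ j * x j = (X iP j + X iQ j) * x j := by ring
        rw [hx2, hr, zero_mul]
      have : g (X *ᵥ x) = (f1 (X *ᵥ x), f2 (X *ᵥ x)) := rfl
      rw [this, hz1, hz2]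
      rfl
    have hle : Module.finrank ℝ ↥(LinearMap.range L') ≤ p + q - 2 := by
      have := Submodule.finrank_mono hWle
      omega
    rw [hkereq] at hrn
    constructor
    · omega
    · omega
end

section
/- Assume p > q. Let x ∈ ℝ^{p+q} satisfy x^{p−i+1} + x^{p+i} = 0 for all 1 ≤ i ≤ q and x^j ≠ 0 for some 1 ≤ j ≤ p−q. Then dim 𝔫_x = q(p−2); equivalently, dim 𝔫 − dim 𝔫_x = q. -/
open Matrix

noncomputable section NP

namespace NP

/-- Parameter lookup: free parameters of `𝔫` laid out as `Fin q → Fin (p-1) → ℝ`.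
`gfun f r c` (1-based `r c`) is the parameter sitting at matrix position `(r,c)`,
either an `A`-block parameter (upper triangular, column `c > p-q`) or a
`B`-block parameter (`r + c > 2p+1`, `r ≤ p < c`). -/
def gfun (p q : ℕ) (f : Fin q → Fin (p-1) → ℝ) (r c : ℕ) : ℝ :=
  if h1 : 1 ≤ r ∧ r < c ∧ c ≤ p ∧ p < c + q then
    f ⟨p - c, by omega⟩ ⟨r - 1, by omega⟩
  else if h2 : p < c ∧ c ≤ p + q ∧ 1 ≤ r ∧ r ≤ p ∧ 2*p+1 < r + c ∧ q < p then
    f ⟨c - p - 1, by omega⟩ ⟨3*p - c - r, by omega⟩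
  else 0

lemma gfun_add (p q : ℕ) (f g : Fin q → Fin (p-1) → ℝ) (r c : ℕ) :
    gfun p q (f + g) r c = gfun p q f r c + gfun p q g r c := by
  unfold gfun; split_ifs <;> simp

lemma gfun_smul (p q : ℕ) (a : ℝ) (f : Fin q → Fin (p-1) → ℝ) (r c : ℕ) :
    gfun p q (a • f) r c = a * gfun p q f r c := by
  unfold gfun; split_ifs <;> simp

lemma gfun_zero (p q : ℕ) (f : Fin q → Fin (p-1) → ℝ) {r c : ℕ}
    (h1 : ¬ (1 ≤ r ∧ r < c ∧ c ≤ p ∧ p < c + q))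
    (h2 : ¬ (p < c ∧ c ≤ p + q ∧ 1 ≤ r ∧ r ≤ p ∧ 2*p+1 < r + c ∧ q < p)) :
    gfun p q f r c = 0 := by
  unfold gfun; rw [dif_neg h1, dif_neg h2]

lemma gfun_eval1 (p q : ℕ) (f : Fin q → Fin (p-1) → ℝ) {r c : ℕ}
    (h : 1 ≤ r ∧ r < c ∧ c ≤ p ∧ p < c + q) :
    gfun p q f r c = f ⟨p - c, by omega⟩ ⟨r - 1, by omega⟩ := by
  unfold gfun; rw [dif_pos h]

lemma gfun_eval2 (p q : ℕ) (f : Fin q → Fin (p-1) → ℝ) {r c : ℕ}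
    (h1 : ¬ (1 ≤ r ∧ r < c ∧ c ≤ p ∧ p < c + q))
    (h : p < c ∧ c ≤ p + q ∧ 1 ≤ r ∧ r ≤ p ∧ 2*p+1 < r + c ∧ q < p) :
    gfun p q f r c = f ⟨c - p - 1, by omega⟩ ⟨3*p - c - r, by omega⟩ := by
  unfold gfun; rw [dif_neg h1, dif_pos h]

/-- The entry (1-based) of the matrix built from the parameters. -/
def entF (p q : ℕ) (f : Fin q → Fin (p-1) → ℝ) (r c : ℕ) : ℝ :=
  if r ≤ p ∧ c ≤ p then gfun p q f r c - gfun p q f c r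
  else if r ≤ p then gfun p q f r c + gfun p q f r (2*p+1-c)
  else if c ≤ p then gfun p q f c r + gfun p q f c (2*p+1-r)
  else - gfun p q f (2*p+1-r) c + gfun p q f (2*p+1-c) r

lemma entF_add (p q : ℕ) (f g : Fin q → Fin (p-1) → ℝ) (r c : ℕ) :
    entF p q (f + g) r c = entF p q f r c + entF p q g r c := by
  unfold entF; split_ifs <;> simp only [gfun_add] <;> ring

lemma entF_smul (p q : ℕ) (a : ℝ) (f : Fin q → Fin (p-1) → ℝ) (r c : ℕ) :
    entF p q (a • f) r c = a * entF p q f r c := by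
  unfold entF; split_ifs <;> simp only [gfun_smul] <;> ring

lemma entF_AA (p q : ℕ) (f : Fin q → Fin (p-1) → ℝ) {r c : ℕ} (hr : r ≤ p) (hc : c ≤ p) :
    entF p q f r c = gfun p q f r c - gfun p q f c r := by
  unfold entF; rw [if_pos ⟨hr, hc⟩]

lemma entF_AB (p q : ℕ) (f : Fin q → Fin (p-1) → ℝ) {r c : ℕ} (hr : r ≤ p) (hc : ¬ c ≤ p) :
    entF p q f r c = gfun p q f r c + gfun p q f r (2*p+1-c) := by
  unfold entF; rw [if_neg (fun h => hc h.2), if_pos hr]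

lemma entF_BA (p q : ℕ) (f : Fin q → Fin (p-1) → ℝ) {r c : ℕ} (hr : ¬ r ≤ p) (hc : c ≤ p) :
    entF p q f r c = gfun p q f c r + gfun p q f c (2*p+1-r) := by
  unfold entF; rw [if_neg (fun h => hr h.1), if_neg hr, if_pos hc]

lemma entF_BB (p q : ℕ) (f : Fin q → Fin (p-1) → ℝ) {r c : ℕ} (hr : ¬ r ≤ p) (hc : ¬ c ≤ p) :
    entF p q f r c = - gfun p q f (2*p+1-r) c + gfun p q f (2*p+1-c) r := by
  unfold entF; rw [if_neg (fun h => hr h.1), if_neg hr, if_neg hc]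

/-- The matrix built from the parameters. -/
def Mmat (p q : ℕ) (f : Fin q → Fin (p-1) → ℝ) : Matrix (Fin (p+q)) (Fin (p+q)) ℝ :=
  fun i j => entF p q f ((i:ℕ)+1) ((j:ℕ)+1)

lemma ent_Mmat (p q : ℕ) (f : Fin q → Fin (p-1) → ℝ) {r c : ℕ}
    (hr : 1 ≤ r) (hr2 : r ≤ p+q) (hc : 1 ≤ c) (hc2 : c ≤ p+q) :
    ent (Mmat p q f) r c = entF p q f r c := by
  unfold ent
  rw [dif_pos ⟨by omega, by omega⟩]
  show entF p q f (r-1+1) (c-1+1) = entF p q f r c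
  congr 1 <;> omega

lemma f_congr {p q : ℕ} (f : Fin q → Fin (p-1) → ℝ) {a a' b b' : ℕ}
    (ha : a < q) (ha' : a' < q) (hb : b < p-1) (hb' : b' < p-1)
    (h1 : a = a') (h2 : b = b') : f ⟨a, ha⟩ ⟨b, hb⟩ = f ⟨a', ha'⟩ ⟨b', hb'⟩ := by
  subst h1; subst h2; rfl


/-- The parametrization as a linear map. -/
def Psi (p q : ℕ) : (Fin q → Fin (p-1) → ℝ) →ₗ[ℝ] Matrix (Fin (p+q)) (Fin (p+q)) ℝ where
  toFun := Mmat p q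
  map_add' f g := by ext i j; exact entF_add p q f g _ _
  map_smul' a f := by ext i j; exact entF_smul p q a f _ _

lemma ent_eq_of {n : ℕ} (X : Matrix (Fin n) (Fin n) ℝ) {r c : ℕ}
    (h1 : r - 1 < n) (h2 : c - 1 < n) :
    ent X r c = X ⟨r-1, h1⟩ ⟨c-1, h2⟩ := by
  unfold ent; rw [dif_pos ⟨h1, h2⟩]

lemma ent_apply {n : ℕ} (X : Matrix (Fin n) (Fin n) ℝ) (i j : Fin n) :
    ent X ((i:ℕ)+1) ((j:ℕ)+1) = X i j := by
  rw [ent_eq_of X (by omega) (by omega)]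
  congr 1

lemma so_ent {p q : ℕ} {X : Matrix (Fin (p+q)) (Fin (p+q)) ℝ} (hX : X ∈ soSet p q)
    {r c : ℕ} (hr : 1 ≤ r) (hr2 : r ≤ p+q) (hc : 1 ≤ c) (hc2 : c ≤ p+q) :
    (if r ≤ p then (1:ℝ) else -1) * ent X r c
      + (if c ≤ p then (1:ℝ) else -1) * ent X c r = 0 := by
  have h := congrFun (congrFun hX (⟨c-1, by omega⟩ : Fin (p+q))) (⟨r-1, by omega⟩ : Fin (p+q))
  simp only [Jmat, Matrix.add_apply, Matrix.mul_diagonal, Matrix.diagonal_mul,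
    Matrix.transpose_apply, Matrix.zero_apply] at h
  rw [ent_eq_of X (by omega : r-1 < p+q) (by omega : c-1 < p+q),
    ent_eq_of X (by omega : c-1 < p+q) (by omega : r-1 < p+q)]
  by_cases h1 : r ≤ p <;> by_cases h2 : c ≤ p
  · rw [if_pos (show r-1 < p by omega), if_pos (show c-1 < p by omega)] at h
    rw [if_pos h1, if_pos h2]; linarith
  · rw [if_pos (show r-1 < p by omega), if_neg (show ¬ c-1 < p by omega)] at h
    rw [if_pos h1, if_neg h2]; linarith
  · rw [if_neg (show ¬ r-1 < p by omega), if_pos (show c-1 < p by omega)] at h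
    rw [if_neg h1, if_pos h2]; linarith
  · rw [if_neg (show ¬ r-1 < p by omega), if_neg (show ¬ c-1 < p by omega)] at h
    rw [if_neg h1, if_neg h2]; linarith

lemma so_skew {p q : ℕ} {X : Matrix (Fin (p+q)) (Fin (p+q)) ℝ} (hX : X ∈ soSet p q)
    {r c : ℕ} (hr : 1 ≤ r) (hc : 1 ≤ c) (hr2 : r ≤ p) (hc2 : c ≤ p) (hq : 1 ≤ q) :
    ent X r c = - ent X c r := by
  have := so_ent hX hr (by omega) hc (by omega)
  rw [if_pos hr2, if_pos hc2] at this; linarith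

lemma so_mixed {p q : ℕ} {X : Matrix (Fin (p+q)) (Fin (p+q)) ℝ} (hX : X ∈ soSet p q)
    {r c : ℕ} (hr : 1 ≤ r) (hr2 : r ≤ p) (hc2 : p < c) (hc3 : c ≤ p+q) :
    ent X r c = ent X c r := by
  have := so_ent hX hr (by omega) (by omega) hc3
  rw [if_pos hr2, if_neg (by omega)] at this; linarith

lemma so_skew2 {p q : ℕ} {X : Matrix (Fin (p+q)) (Fin (p+q)) ℝ} (hX : X ∈ soSet p q)
    {r c : ℕ} (hr2 : p < r) (hr3 : r ≤ p+q) (hc2 : p < c) (hc3 : c ≤ p+q) :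
    ent X r c = - ent X c r := by
  have := so_ent hX (by omega) hr3 (by omega) hc3
  rw [if_neg (by omega), if_neg (by omega)] at this; linarith

lemma so_diag {p q : ℕ} {X : Matrix (Fin (p+q)) (Fin (p+q)) ℝ} (hX : X ∈ soSet p q)
    {r : ℕ} (hr : 1 ≤ r) (hr2 : r ≤ p+q) :
    ent X r r = 0 := by
  have := so_ent hX hr hr2 hr hr2
  by_cases h : r ≤ p
  · rw [if_pos h] at this; linarith
  · rw [if_neg h] at this; linarith


lemma Mmat_mem_so (p q : ℕ) (f : Fin q → Fin (p-1) → ℝ) : Mmat p q f ∈ soSet p q := by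
  ext a b
  simp only [Jmat, Matrix.add_apply, Matrix.mul_diagonal, Matrix.diagonal_mul,
    Matrix.transpose_apply, Matrix.zero_apply, Mmat, entF]
  split_ifs <;> first | omega | ring1

lemma Mmat_mem_n (p q : ℕ) (hq : 1 ≤ q) (hpq : q < p) (f : Fin q → Fin (p-1) → ℝ) :
    Mmat p q f ∈ nSet p q := by
  refine ⟨Mmat_mem_so p q f, ?_, ?_, ?_, ?_, ?_⟩
  · intro i j hi hi' hj hj'
    rw [ent_Mmat p q f (by omega) (by omega) (by omega) (by omega),
        entF_AA p q f (by omega) (by omega),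
        gfun_zero p q f (by omega) (by omega), gfun_zero p q f (by omega) (by omega)]
    ring
  · intro l hl hl'
    rw [ent_Mmat p q f (by omega) (by omega) (by omega) (by omega),
        entF_AB p q f (by omega) (by omega),
        gfun_zero p q f (by omega) (by omega), gfun_zero p q f (by omega) (by omega)]
    ring
  · intro k l hk hk' hl hl'
    rw [ent_Mmat p q f (by omega) (by omega) (by omega) (by omega),
        ent_Mmat p q f (by omega) (by omega) (by omega) (by omega),
        entF_AA p q f (by omega) (by omega), entF_AB p q f (by omega) (by omega),
        gfun_zero p q f (r := p-l+1) (c := k) (by omega) (by omega),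
        gfun_zero p q f (r := k) (c := p+l) (by omega) (by omega),
        gfun_eval1 p q f (by omega), gfun_eval1 p q f (by omega), sub_zero, zero_add]
    apply f_congr <;> omega
  · intro i j hi hij hj
    rw [ent_Mmat p q f (by omega) (by omega) (by omega) (by omega),
        ent_Mmat p q f (by omega) (by omega) (by omega) (by omega),
        entF_AA p q f (by omega) (by omega), entF_AB p q f (by omega) (by omega),
        gfun_zero p q f (r := p+1-i) (c := p+1-j) (by omega) (by omega),
        gfun_zero p q f (r := p+1-j) (c := p+i) (by omega) (by omega),
        gfun_eval1 p q f (by omega), gfun_eval1 p q f (by omega),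
        sub_zero, zero_add]
    apply f_congr <;> omega
  · intro i j hi hij hj
    rw [ent_Mmat p q f (by omega) (by omega) (by omega) (by omega)]
    rw [ent_Mmat p q f (by omega) (by omega) (by omega) (by omega)]
    rw [entF_BB p q f (by omega) (by omega)]
    rw [entF_AB p q f (by omega) (by omega)]
    rw [gfun_zero p q f (r := 2*p+1-(p+j)) (c := p+i) (by omega) (by omega)]
    rw [gfun_zero p q f (r := p+1-i) (c := 2*p+1-(p+j)) (by omega) (by omega)]
    rw [gfun_eval2 p q f (r := 2*p+1-(p+i)) (c := p+j) (by omega) (by omega)]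
    rw [gfun_eval2 p q f (r := p+1-i) (c := p+j) (by omega) (by omega)]
    simp only [add_zero, neg_inj]
    apply f_congr <;> omega


/-- Reads the free parameters off a matrix. -/
def readF (p q : ℕ) (X : Matrix (Fin (p+q)) (Fin (p+q)) ℝ) : Fin q → Fin (p-1) → ℝ :=
  fun l m =>
    if ((m:ℕ)+1) + ((l:ℕ)+1) ≤ p then ent X ((m:ℕ)+1) (p+1-((l:ℕ)+1))
    else ent X (2*p+1-((m:ℕ)+1)-((l:ℕ)+1)) (p+((l:ℕ)+1))

lemma readF_Mmat (p q : ℕ) (hq : 1 ≤ q) (hpq : q < p) (f : Fin q → Fin (p-1) → ℝ) :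
    readF p q (Mmat p q f) = f := by
  funext l m
  unfold readF
  by_cases h : ((m:ℕ)+1) + ((l:ℕ)+1) ≤ p
  · rw [if_pos h]
    have hm := m.isLt
    have hl := l.isLt
    rw [ent_Mmat p q f (by omega) (by omega) (by omega) (by omega),
        entF_AA p q f (by omega) (by omega),
        gfun_zero p q f (r := p+1-((l:ℕ)+1)) (c := (m:ℕ)+1) (by omega) (by omega),
        gfun_eval1 p q f (by omega), sub_zero]
    have : f ⟨(l:ℕ), hl⟩ ⟨(m:ℕ), hm⟩ = f l m := by congr 1
    rw [← this]
    apply f_congr <;> omega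
  · rw [if_neg h]
    have hm := m.isLt
    have hl := l.isLt
    rw [ent_Mmat p q f (by omega) (by omega) (by omega) (by omega),
        entF_AB p q f (by omega) (by omega),
        gfun_zero p q f (r := 2*p+1-((m:ℕ)+1)-((l:ℕ)+1)) (c := 2*p+1-(p+((l:ℕ)+1)))
          (by omega) (by omega),
        gfun_eval2 p q f (by omega) (by omega), add_zero]
    have : f ⟨(l:ℕ), hl⟩ ⟨(m:ℕ), hm⟩ = f l m := by congr 1
    rw [← this]
    apply f_congr <;> omega

lemma gfun_readF (p q : ℕ) (X : Matrix (Fin (p+q)) (Fin (p+q)) ℝ) {r c : ℕ}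
    (h : (1 ≤ r ∧ r < c ∧ c ≤ p ∧ p < c + q) ∨
      (p < c ∧ c ≤ p + q ∧ 1 ≤ r ∧ r ≤ p ∧ 2*p+1 < r + c ∧ q < p)) :
    gfun p q (readF p q X) r c = ent X r c := by
  rcases h with h | h
  · rw [gfun_eval1 p q _ h]
    unfold readF
    rw [if_pos (by simp only []; omega)]
    show ent X (r-1+1) (p+1-(p-c+1)) = ent X r c
    congr 1 <;> omega
  · rw [gfun_eval2 p q _ (by omega) h]
    unfold readF
    rw [if_neg (by simp only []; omega)]
    show ent X (2*p+1-(3*p-c-r+1)-(c-p-1+1)) (p+(c-p-1+1)) = ent X r c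
    congr 1 <;> omega


lemma recon_AB (p q : ℕ) (hq : 1 ≤ q) (hpq : q < p) {X : Matrix (Fin (p+q)) (Fin (p+q)) ℝ}
    (hX : X ∈ nSet p q) {r c : ℕ} (hr : 1 ≤ r) (hr2 : r ≤ p) (hc : p < c) (hc2 : c ≤ p+q) :
    gfun p q (readF p q X) r c + gfun p q (readF p q X) r (2*p+1-c) = ent X r c := by
  obtain ⟨hso, h1, h2, h3, h4, h5⟩ := hX
  rcases Nat.lt_trichotomy (r + c) (2*p+1) with h | h | h
  · rw [gfun_zero p q _ (r := r) (c := c) (by omega) (by omega),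
        gfun_readF p q X (Or.inl ⟨by omega, by omega, by omega, by omega⟩), zero_add]
    by_cases hrq : r ≤ p - q
    · have h3' := h3 r (c-p) (by omega) (by omega) (by omega) (by omega)
      rw [show p-(c-p)+1 = 2*p+1-c by omega, show p+(c-p) = c by omega] at h3'
      rw [h3']
    · have h4' := h4 (c-p) (p+1-r) (by omega) (by omega) (by omega)
      rw [show p+1-(p+1-r) = r by omega, show p+1-(c-p) = 2*p+1-c by omega,
          show p+(c-p) = c by omega] at h4'
      rw [h4']
  · rw [gfun_zero p q _ (r := r) (c := c) (by omega) (by omega),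
        gfun_zero p q _ (r := r) (c := 2*p+1-c) (by omega) (by omega)]
    have h2' := h2 (c-p) (by omega) (by omega)
    rw [show p-(c-p)+1 = r by omega, show p+(c-p) = c by omega] at h2'
    rw [h2']; ring
  · rw [gfun_readF p q X (Or.inr ⟨by omega, by omega, by omega, by omega, by omega, by omega⟩),
        gfun_zero p q _ (r := r) (c := 2*p+1-c) (by omega) (by omega), add_zero]

lemma recon (p q : ℕ) (hq : 1 ≤ q) (hpq : q < p) {X : Matrix (Fin (p+q)) (Fin (p+q)) ℝ}
    (hX : X ∈ nSet p q) {r c : ℕ} (hr : 1 ≤ r) (hr2 : r ≤ p+q) (hc : 1 ≤ c) (hc2 : c ≤ p+q) :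
    entF p q (readF p q X) r c = ent X r c := by
  obtain ⟨hso, h1, h2, h3, h4, h5⟩ := hX
  by_cases hrp : r ≤ p <;> by_cases hcp : c ≤ p
  · -- A block
    rw [entF_AA p q _ hrp hcp]
    rcases Nat.lt_trichotomy r c with h | h | h
    · rw [gfun_zero p q _ (r := c) (c := r) (by omega) (by omega), sub_zero]
      by_cases hcq : p < c + q
      · rw [gfun_readF p q X (Or.inl ⟨by omega, h, hcp, hcq⟩)]
      · rw [gfun_zero p q _ (r := r) (c := c) (by omega) (by omega),
            h1 r c (by omega) (by omega) (by omega) (by omega)]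
    · subst h
      rw [gfun_zero p q _ (r := r) (c := r) (by omega) (by omega),
          so_diag hso (by omega) (by omega)]
      ring
    · rw [gfun_zero p q _ (r := r) (c := c) (by omega) (by omega)]
      by_cases hrq : p < r + q
      · rw [gfun_readF p q X (Or.inl ⟨by omega, h, hrp, hrq⟩),
            so_skew hso (by omega) (by omega) hrp hcp hq]
        ring
      · rw [gfun_zero p q _ (r := c) (c := r) (by omega) (by omega),
            h1 r c (by omega) (by omega) (by omega) (by omega)]
        ring
  · -- B block
    rw [entF_AB p q _ hrp hcp]
    exact recon_AB p q hq hpq ⟨hso, h1, h2, h3, h4, h5⟩ hr hrp (by omega) hc2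
  · -- Bᵀ block
    rw [entF_BA p q _ hrp hcp,
        ← so_mixed hso (r := c) (c := r) hc hcp (by omega) hr2]
    exact recon_AB p q hq hpq ⟨hso, h1, h2, h3, h4, h5⟩ hc hcp (by omega) hr2
  · -- D block
    rw [entF_BB p q _ hrp hcp]
    rcases Nat.lt_trichotomy r c with h | h | h
    · rw [gfun_readF p q X (r := 2*p+1-r) (c := c)
          (Or.inr ⟨by omega, by omega, by omega, by omega, by omega, by omega⟩),
          gfun_zero p q _ (r := 2*p+1-c) (c := r) (by omega) (by omega), add_zero]
      have h5' := h5 (r-p) (c-p) (by omega) (by omega) (by omega)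
      rw [show p+(r-p) = r by omega, show p+(c-p) = c by omega,
          show p+1-(r-p) = 2*p+1-r by omega] at h5'
      rw [h5']
    · subst h
      rw [gfun_zero p q _ (r := 2*p+1-r) (c := r) (by omega) (by omega),
          so_diag hso (by omega) (by omega)]
      ring
    · rw [gfun_zero p q _ (r := 2*p+1-r) (c := c) (by omega) (by omega),
          gfun_readF p q X (r := 2*p+1-c) (c := r)
          (Or.inr ⟨by omega, by omega, by omega, by omega, by omega, by omega⟩)]
      have h5' := h5 (c-p) (r-p) (by omega) (by omega) (by omega)
      rw [show p+(c-p) = c by omega, show p+(r-p) = r by omega,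
          show p+1-(c-p) = 2*p+1-c by omega] at h5'
      have hsk := so_skew2 hso (r := r) (c := c) (by omega) (by omega) (by omega) (by omega)
      rw [hsk, h5']
      ring

lemma Mmat_readF (p q : ℕ) (hq : 1 ≤ q) (hpq : q < p) {X : Matrix (Fin (p+q)) (Fin (p+q)) ℝ}
    (hX : X ∈ nSet p q) : Mmat p q (readF p q X) = X := by
  ext i j
  have h := recon p q hq hpq hX (r := (i:ℕ)+1) (c := (j:ℕ)+1)
    (by omega) (by omega) (by omega) (by omega)
  rw [ent_apply] at h
  exact h.symm ▸ rfl


lemma X_eq_ent {n : ℕ} (X : Matrix (Fin n) (Fin n) ℝ) (i j : Fin n) (A B : ℕ)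
    (hA : (i:ℕ) = A - 1) (hB : (j:ℕ) = B - 1) (hA1 : 1 ≤ A) (hB1 : 1 ≤ B) :
    X i j = ent X A B := by
  have hi := i.isLt
  have hj := j.isLt
  rw [ent_eq_of X (by omega) (by omega)]
  congr 1
  · exact Fin.ext (show (i:ℕ) = A - 1 from hA)
  · exact Fin.ext (show (j:ℕ) = B - 1 from hB)

/-- The key pairing lemma: sums `∑ v c * x c` vanish when `v` vanishes on the first
`p-q` coordinates and is symmetric under the pairing `c ↔ 2p-1-c`, while `x` is
antisymmetric under that pairing. -/
lemma pair_sum (p q : ℕ) (hq : 1 ≤ q) (hpq : q < p) (x v : Fin (p+q) → ℝ)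
    (hx : ∀ a b : Fin (p+q), p ≤ (a:ℕ) → (b:ℕ) = 2*p-1-(a:ℕ) → x a = - x b)
    (h0 : ∀ c : Fin (p+q), (c:ℕ) < p - q → v c = 0)
    (hp : ∀ a b : Fin (p+q), p - q ≤ (a:ℕ) → (a:ℕ) < p → (b:ℕ) = 2*p-1-(a:ℕ) →
      v a = v b) :
    ∑ c : Fin (p+q), v c * x c = 0 := by
  refine Finset.sum_involution
    (fun a _ => if h : (a:ℕ) < p - q then a else ⟨2*p-1-(a:ℕ), by have := a.isLt; omega⟩)
    ?_ ?_ ?_ ?_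
  · intro a _
    by_cases h : (a:ℕ) < p - q
    · simp only [dif_pos h]
      rw [h0 a h]; ring
    · have ha := a.isLt
      simp only [dif_neg h]
      set b : Fin (p+q) := ⟨2*p-1-(a:ℕ), by omega⟩ with hb
      have hbv : (b:ℕ) = 2*p-1-(a:ℕ) := rfl
      by_cases h2 : (a:ℕ) < p
      · have e1 := hp a b (by omega) h2 hbv
        have e2 := hx b a (by omega) (by omega)
        rw [e1, e2]; ring
      · have e1 := hp b a (by omega) (by omega) (by omega)
        have e2 := hx a b (by omega) hbv
        rw [← e1, e2]; ring
  · intro a _ hfa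
    by_cases h : (a:ℕ) < p - q
    · exact absurd (by rw [h0 a h]; ring) hfa
    · have ha := a.isLt
      simp only [dif_neg h]
      intro heq
      have h2 : 2*p-1-(a:ℕ) = (a:ℕ) := congrArg Fin.val heq
      omega
  · intro a _; exact Finset.mem_univ _
  · intro a _
    by_cases h : (a:ℕ) < p - q
    · simp only [dif_pos h]
    · have ha := a.isLt
      simp only [dif_neg h]
      rw [dif_neg (show ¬ ((⟨2*p-1-(a:ℕ), by omega⟩ : Fin (p+q)) : ℕ) < p - q by
        show ¬ (2*p-1-(a:ℕ) < p - q); omega)]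
      exact Fin.ext (show 2*p-1-(2*p-1-(a:ℕ)) = (a:ℕ) by omega)

/-- The `S`-relation: combined row relation for the rows `p+1-l` and `p+l`. -/
lemma Srel (p q : ℕ) (hq : 1 ≤ q) (hpq : q < p) {X : Matrix (Fin (p+q)) (Fin (p+q)) ℝ}
    (hX : X ∈ nSet p q) {l i : ℕ} (hl : 1 ≤ l) (hl2 : l ≤ q) (hi : 1 ≤ i) (hi2 : i ≤ q) :
    ent X (p-l+1) (p+1-i) + ent X (p+l) (p+1-i)
      = ent X (p-l+1) (p+i) + ent X (p+l) (p+i) := by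
  obtain ⟨hso, h1, h2, h3, h4, h5⟩ := hX
  rw [show p-l+1 = p+1-l by omega]
  rcases Nat.lt_trichotomy i l with h | h | h
  · have e1 := h4 i l hi h hl2
    have e2 := h5 i l hi h hl2
    have e3 := so_mixed hso (r := p+1-i) (c := p+l) (by omega) (by omega) (by omega) (by omega)
    have e4 := so_skew2 hso (r := p+l) (c := p+i) (by omega) (by omega) (by omega) (by omega)
    linarith
  · subst h
    have e1 := so_diag hso (r := p+1-i) (by omega) (by omega)
    have e2 := so_diag hso (r := p+i) (by omega) (by omega)
    have e3 := h2 i hi hi2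
    rw [show p-i+1 = p+1-i by omega] at e3
    have e4 := so_mixed hso (r := p+1-i) (c := p+i) (by omega) (by omega) (by omega) (by omega)
    linarith
  · have f1 := so_skew hso (r := p+1-l) (c := p+1-i) (by omega) (by omega) (by omega) (by omega) hq
    have f2 := h4 l i hl h hi2
    have f3 := so_mixed hso (r := p+1-i) (c := p+l) (by omega) (by omega) (by omega) (by omega)
    have f4 := h5 l i hl h hi2
    rw [show p+1-l = p-l+1 by omega] at f4
    rw [show p-l+1 = p+1-l by omega] at f4
    linarith


lemma mulVec_low (p q : ℕ) (hq : 1 ≤ q) (hpq : q < p) {X : Matrix (Fin (p+q)) (Fin (p+q)) ℝ}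
    (hX : X ∈ nSet p q) {x : Fin (p+q) → ℝ}
    (hx : ∀ a b : Fin (p+q), p ≤ (a:ℕ) → (b:ℕ) = 2*p-1-(a:ℕ) → x a = - x b)
    (r : Fin (p+q)) (hr : (r:ℕ) < p - q) : (X *ᵥ x) r = 0 := by
  obtain ⟨hso, h1, h2, h3, h4, h5⟩ := hX
  show ∑ c, X r c * x c = 0
  refine pair_sum p q hq hpq x _ hx ?_ ?_
  · intro c hc
    have e := h1 ((r:ℕ)+1) ((c:ℕ)+1) (by omega) (by omega) (by omega) (by omega)
    rw [ent_apply] at e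
    exact e
  · intro a b ha1 ha2 hb
    have hav := a.isLt
    have e := h3 ((r:ℕ)+1) (p-(a:ℕ)) (by omega) (by omega) (by omega) (by omega)
    rw [X_eq_ent X r a ((r:ℕ)+1) (p-(p-(a:ℕ))+1) (by omega) (by omega) (by omega) (by omega),
        X_eq_ent X r b ((r:ℕ)+1) (p+(p-(a:ℕ))) (by omega) (by omega) (by omega) (by omega)]
    exact e

lemma mulVec_high (p q : ℕ) (hq : 1 ≤ q) (hpq : q < p) {X : Matrix (Fin (p+q)) (Fin (p+q)) ℝ}
    (hX : X ∈ nSet p q) {x : Fin (p+q) → ℝ}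
    (hx : ∀ a b : Fin (p+q), p ≤ (a:ℕ) → (b:ℕ) = 2*p-1-(a:ℕ) → x a = - x b)
    (l : ℕ) (hl : 1 ≤ l) (hl2 : l ≤ q) :
    (X *ᵥ x) ⟨p-l, by omega⟩ + (X *ᵥ x) ⟨p+l-1, by omega⟩ = 0 := by
  have hX' := hX
  obtain ⟨hso, h1, h2, h3, h4, h5⟩ := hX
  have key : ∑ c : Fin (p+q),
      ((X ⟨p-l, by omega⟩ c + X ⟨p+l-1, by omega⟩ c) * x c) = 0 := by
    refine pair_sum p q hq hpq x _ hx ?_ ?_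
    · intro c hc
      have hcv := c.isLt
      have e1 := so_skew hso (r := p-l+1) (c := (c:ℕ)+1)
        (by omega) (by omega) (by omega) (by omega) hq
      have e2 := so_mixed hso (r := (c:ℕ)+1) (c := p+l) (by omega) (by omega) (by omega) (by omega)
      have e3 := h3 ((c:ℕ)+1) l (by omega) (by omega) (by omega) (by omega)
      rw [X_eq_ent X _ c (p-l+1) ((c:ℕ)+1) (by show p-l = p-l+1-1; omega) (by omega)
            (by omega) (by omega),
          X_eq_ent X _ c (p+l) ((c:ℕ)+1) (by show p+l-1 = p+l-1; omega) (by omega)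
            (by omega) (by omega)]
      linarith
    · intro a b ha1 ha2 hb
      have hav := a.isLt
      have hs := Srel p q hq hpq hX' (l := l) (i := p-(a:ℕ)) hl hl2 (by omega) (by omega)
      rw [X_eq_ent X _ a (p-l+1) (p+1-(p-(a:ℕ))) (by show p-l = p-l+1-1; omega) (by omega)
            (by omega) (by omega),
          X_eq_ent X _ a (p+l) (p+1-(p-(a:ℕ))) (by show p+l-1 = p+l-1; omega) (by omega)
            (by omega) (by omega),
          X_eq_ent X _ b (p-l+1) (p+(p-(a:ℕ))) (by show p-l = p-l+1-1; omega) (by omega)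
            (by omega) (by omega),
          X_eq_ent X _ b (p+l) (p+(p-(a:ℕ))) (by show p+l-1 = p+l-1; omega) (by omega)
            (by omega) (by omega)]
      linarith
  have expand : ∀ (w : Fin (p+q)), (X *ᵥ x) w = ∑ c, X w c * x c := fun w => rfl
  rw [expand _, expand _, ← Finset.sum_add_distrib, ← key]
  exact Finset.sum_congr rfl (fun c _ => by ring)

lemma mulVec_zero_iff (p q : ℕ) (hq : 1 ≤ q) (hpq : q < p)
    {X : Matrix (Fin (p+q)) (Fin (p+q)) ℝ} (hX : X ∈ nSet p q) {x : Fin (p+q) → ℝ}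
    (hx : ∀ a b : Fin (p+q), p ≤ (a:ℕ) → (b:ℕ) = 2*p-1-(a:ℕ) → x a = - x b) :
    X *ᵥ x = 0 ↔ ∀ l : Fin q, (X *ᵥ x) ⟨p+(l:ℕ), by have := l.isLt; omega⟩ = 0 := by
  constructor
  · intro h l; rw [h]; rfl
  · intro h
    funext r
    have hrv := r.isLt
    show (X *ᵥ x) r = 0
    by_cases h1 : (r:ℕ) < p - q
    · exact mulVec_low p q hq hpq hX hx r h1
    · by_cases h2 : (r:ℕ) < p
      · have e1 := mulVec_high p q hq hpq hX hx (p-(r:ℕ)) (by omega) (by omega)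
        have e2 := h ⟨p-(r:ℕ)-1, by omega⟩
        have er : (⟨p-(p-(r:ℕ)), by omega⟩ : Fin (p+q)) = r := Fin.ext (by
          show p-(p-(r:ℕ)) = (r:ℕ); omega)
        have eb : (⟨p+(p-(r:ℕ))-1, by omega⟩ : Fin (p+q))
            = (⟨p+((⟨p-(r:ℕ)-1, by omega⟩ : Fin q) : ℕ), by
                show p+(p-(r:ℕ)-1) < p+q; omega⟩ : Fin (p+q)) := Fin.ext (by
          show p+(p-(r:ℕ))-1 = p+(p-(r:ℕ)-1); omega)
        rw [er, eb] at e1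
        rw [e2] at e1
        linarith
      · have e2 := h ⟨(r:ℕ)-p, by omega⟩
        have er : (⟨p+(((⟨(r:ℕ)-p, by omega⟩ : Fin q)) : ℕ), by
            show p+((r:ℕ)-p) < p+q; omega⟩ : Fin (p+q)) = r := Fin.ext (by
          show p+((r:ℕ)-p) = (r:ℕ); omega)
        rw [er] at e2
        exact e2


lemma Psi_inj (p q : ℕ) (hq : 1 ≤ q) (hpq : q < p) : Function.Injective (Psi p q) := by
  intro f g h
  have h2 := congrArg (readF p q) h
  rwa [show (Psi p q) f = Mmat p q f from rfl, show (Psi p q) g = Mmat p q g from rfl,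
    readF_Mmat p q hq hpq, readF_Mmat p q hq hpq] at h2

lemma range_Psi (p q : ℕ) (hq : 1 ≤ q) (hpq : q < p) :
    LinearMap.range (Psi p q) = nSub p q := by
  apply le_antisymm
  · rintro X ⟨f, rfl⟩
    exact Mmat_mem_n p q hq hpq f
  · intro X hX
    exact ⟨readF p q X, Mmat_readF p q hq hpq hX⟩

/-- The linear map reading off the coordinates `p+1, …, p+q` of `(Mmat f) x`. -/
def Tmap (p q : ℕ) (x : Fin (p+q) → ℝ) : (Fin q → Fin (p-1) → ℝ) →ₗ[ℝ] (Fin q → ℝ) where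
  toFun f := fun l => (Mmat p q f *ᵥ x) ⟨p+(l:ℕ), by have := l.isLt; omega⟩
  map_add' f g := by
    funext l
    have h : Mmat p q (f+g) = Mmat p q f + Mmat p q g := by
      ext i j; exact entF_add p q f g _ _
    simp only [h, Matrix.add_mulVec, Pi.add_apply]
  map_smul' a f := by
    funext l
    have h : Mmat p q (a • f) = a • Mmat p q f := by
      ext i j; exact entF_smul p q a f _ _
    simp only [h, Matrix.smul_mulVec, Pi.smul_apply, RingHom.id_apply, smul_eq_mul]

lemma Tmap_surj (p q : ℕ) (hq : 1 ≤ q) (hpq : q < p) (x : Fin (p+q) → ℝ)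
    (j0 : ℕ) (hj1 : 1 ≤ j0) (hj2 : j0 ≤ p - q) (hxj : x ⟨j0-1, by omega⟩ ≠ 0) :
    Function.Surjective (Tmap p q x) := by
  intro t
  set xj : ℝ := x ⟨j0-1, by omega⟩ with hxjdef
  set f0 : Fin q → Fin (p-1) → ℝ :=
    fun l0 m0 => if (m0:ℕ) = j0-1 then t l0 / xj else 0 with hf0
  have row : ∀ (l0 : Fin q) (c : Fin (p+q)),
      Mmat p q f0 ⟨p+(l0:ℕ), by have := l0.isLt; omega⟩ c
        = if (c:ℕ) = j0-1 then t l0 / xj else 0 := by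
    intro l0 c
    have hl0 := l0.isLt
    have hcv := c.isLt
    show entF p q f0 (p+(l0:ℕ)+1) ((c:ℕ)+1) = _
    by_cases hcp : (c:ℕ)+1 ≤ p
    · have z0 : gfun p q f0 ((c:ℕ)+1) (p+(l0:ℕ)+1) = 0 := by
        by_cases hg2 : 2*p+1 < ((c:ℕ)+1) + (p+(l0:ℕ)+1)
        · rw [gfun_eval2 p q f0 (by omega) ⟨by omega, by omega, by omega, by omega, hg2, hpq⟩]
          show (if (3*p-(p+(l0:ℕ)+1)-((c:ℕ)+1) : ℕ) = j0-1 then _ / xj else 0) = 0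
          rw [if_neg (by omega)]
        · exact gfun_zero p q f0 (by omega) (by omega)
      rw [entF_BA p q f0 (by omega) hcp, z0]
      by_cases hg : (c:ℕ)+1 < 2*p+1-(p+(l0:ℕ)+1)
      · rw [gfun_eval1 p q f0 (r := (c:ℕ)+1) (c := 2*p+1-(p+(l0:ℕ)+1))
            ⟨by omega, hg, by omega, by omega⟩, zero_add]
        show (if ((c:ℕ)+1-1 : ℕ) = j0-1 then
          t ⟨p-(2*p+1-(p+(l0:ℕ)+1)), by omega⟩ / xj else 0) = _
        by_cases hc0 : (c:ℕ) = j0-1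
        · rw [if_pos (by omega), if_pos hc0]
          have e : (⟨p-(2*p+1-(p+(l0:ℕ)+1)), by omega⟩ : Fin q) = l0 :=
            Fin.ext (by show p-(2*p+1-(p+(l0:ℕ)+1)) = (l0:ℕ); omega)
          rw [e]
        · rw [if_neg (by omega), if_neg hc0]
      · rw [gfun_zero p q f0 (r := (c:ℕ)+1) (c := 2*p+1-(p+(l0:ℕ)+1)) (by omega) (by omega),
            if_neg (by omega)]
        ring
    · rw [entF_BB p q f0 (by omega) hcp, if_neg (by omega)]
      have z1 : gfun p q f0 (2*p+1-(p+(l0:ℕ)+1)) ((c:ℕ)+1) = 0 := by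
        by_cases hg : 2*p+1 < (2*p+1-(p+(l0:ℕ)+1)) + ((c:ℕ)+1)
        · rw [gfun_eval2 p q f0 (by omega) ⟨by omega, by omega, by omega, by omega, hg, hpq⟩]
          show (if (3*p-((c:ℕ)+1)-(2*p+1-(p+(l0:ℕ)+1)) : ℕ) = j0-1 then _ / xj else 0) = 0
          rw [if_neg (by omega)]
        · exact gfun_zero p q f0 (by omega) (by omega)
      have z2 : gfun p q f0 (2*p+1-((c:ℕ)+1)) (p+(l0:ℕ)+1) = 0 := by
        by_cases hg : 2*p+1 < (2*p+1-((c:ℕ)+1)) + (p+(l0:ℕ)+1)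
        · rw [gfun_eval2 p q f0 (by omega) ⟨by omega, by omega, by omega, by omega, hg, hpq⟩]
          show (if (3*p-(p+(l0:ℕ)+1)-(2*p+1-((c:ℕ)+1)) : ℕ) = j0-1 then _ / xj else 0) = 0
          rw [if_neg (by omega)]
        · exact gfun_zero p q f0 (by omega) (by omega)
      rw [z1, z2]
      ring
  refine ⟨f0, ?_⟩
  funext l0
  show (Mmat p q f0 *ᵥ x) ⟨p+(l0:ℕ), by have := l0.isLt; omega⟩ = t l0
  show ∑ c : Fin (p+q), Mmat p q f0 ⟨p+(l0:ℕ), by have := l0.isLt; omega⟩ c * x c = t l0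
  rw [Finset.sum_eq_single (⟨j0-1, by omega⟩ : Fin (p+q))]
  · rw [row l0 ⟨j0-1, by omega⟩, if_pos (by show j0-1 = j0-1; rfl)]
    exact div_mul_cancel₀ (t l0) hxj
  · intro b _ hb
    rw [row l0 b, if_neg (by
      intro hbv
      exact hb (Fin.ext (by show (b:ℕ) = j0-1; omega)))]
    ring
  · intro hmem
    exact absurd (Finset.mem_univ _) hmem

lemma v_eq_vent {n : ℕ} (x : Fin n → ℝ) (i : Fin n) (A : ℕ)
    (hA : (i:ℕ) = A-1) (hA1 : 1 ≤ A) : x i = vent x A := by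
  have := i.isLt
  unfold vent
  rw [dif_pos (by omega)]
  congr 1
  exact Fin.ext (show (i:ℕ) = A-1 from hA)

end NP

end NP

/-- Assume `p > q`. If `x^{p-i+1} + x^{p+i} = 0` for all `1 ≤ i ≤ q` and
`x^j ≠ 0` for some `1 ≤ j ≤ p-q`, then `dim 𝔫_x = q(p-2)`; equivalently
`dim 𝔫 - dim 𝔫_x = q`. -/
theorem nSub_stabilizer_dim_case2 (p q : ℕ) (hq : 1 ≤ q) (hpq : q < p)
    (x : Fin (p + q) → ℝ)
    (hzero : ∀ i, 1 ≤ i → i ≤ q → vent x (p - i + 1) + vent x (p + i) = 0)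
    (hne : ∃ j, 1 ≤ j ∧ j ≤ p - q ∧ vent x j ≠ 0) :
    Module.finrank ℝ ↥(nSub p q ⊓ kerAt x) = q * (p - 2) ∧
    Module.finrank ℝ ↥(nSub p q) - Module.finrank ℝ ↥(nSub p q ⊓ kerAt x) = q := by
  classical
  -- the antisymmetry property of `x`
  have hx : ∀ a b : Fin (p+q), p ≤ (a:ℕ) → (b:ℕ) = 2*p-1-(a:ℕ) → x a = - x b := by
    intro a b ha hb
    have hav := a.isLt
    have hbv := b.isLt
    have e := hzero ((a:ℕ)+1-p) (by omega) (by omega)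
    rw [← NP.v_eq_vent x b (p-((a:ℕ)+1-p)+1) (by omega) (by omega),
        ← NP.v_eq_vent x a (p+((a:ℕ)+1-p)) (by omega) (by omega)] at e
    linarith
  obtain ⟨j0, hj1, hj2, hj3⟩ := hne
  have hxj : x ⟨j0-1, by omega⟩ ≠ 0 := by
    rwa [NP.v_eq_vent x ⟨j0-1, by omega⟩ j0 (by show j0-1 = j0-1; rfl) hj1]
  have hrange := NP.range_Psi p q hq hpq
  have hinjP := NP.Psi_inj p q hq hpq
  have hdim_n : Module.finrank ℝ ↥(nSub p q) = q * (p-1) := by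
    rw [← hrange, LinearMap.finrank_range_of_inj hinjP]
    simp [Module.finrank_pi_fintype]
  set T := NP.Tmap p q x with hT
  have hker : Submodule.map (NP.Psi p q) (LinearMap.ker T) = nSub p q ⊓ kerAt x := by
    ext X
    constructor
    · rintro ⟨f, hf, rfl⟩
      have hf' : T f = 0 := hf
      refine Submodule.mem_inf.mpr ⟨NP.Mmat_mem_n p q hq hpq f, ?_⟩
      show NP.Mmat p q f *ᵥ x = 0
      rw [NP.mulVec_zero_iff p q hq hpq (NP.Mmat_mem_n p q hq hpq f) hx]
      intro l
      exact congrFun hf' l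
    · intro hX
      obtain ⟨hX1, hX2⟩ := Submodule.mem_inf.mp hX
      refine ⟨NP.readF p q X, ?_, NP.Mmat_readF p q hq hpq hX1⟩
      show T (NP.readF p q X) = 0
      funext l
      show (NP.Mmat p q (NP.readF p q X) *ᵥ x) _ = _
      rw [NP.Mmat_readF p q hq hpq hX1]
      have hX2' : X *ᵥ x = 0 := hX2
      rw [hX2']
      rfl
  have hsurj : Function.Surjective T := NP.Tmap_surj p q hq hpq x j0 hj1 hj2 hxj
  have hrank : Module.finrank ℝ (LinearMap.range T) = q := by
    rw [LinearMap.range_eq_top.mpr hsurj]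
    simp [Module.finrank_pi_fintype]
  have hrn := LinearMap.finrank_range_add_finrank_ker T
  have hdom : Module.finrank ℝ (Fin q → Fin (p-1) → ℝ) = q * (p-1) := by
    simp [Module.finrank_pi_fintype]
  rw [hdom, hrank] at hrn
  have hmapdim : Module.finrank ℝ ↥(nSub p q ⊓ kerAt x)
      = Module.finrank ℝ (LinearMap.ker T) := by
    rw [← hker]
    exact (LinearEquiv.finrank_eq (Submodule.equivMapOfInjective _ hinjP _)).symm
  have hq2 : q*(p-1) = q*(p-2) + q := by
    rw [show p-1 = (p-2)+1 by omega, Nat.mul_add, Nat.mul_one]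
  constructor
  · rw [hmapdim]; omega
  · rw [hdim_n, hmapdim]; omega
end

section
/- Let x ∈ ℝ^{p+q} be nonzero with x^j = 0 for all 1 ≤ j ≤ p−q and x^{p−i+1} + x^{p+i} = 0 for all 1 ≤ i ≤ q, and let l := max{ j ∈ {1,…,q} : x^{p+j} ≠ 0 }. Then dim 𝔫_x = q(p−1) − (l−1); equivalently, dim 𝔫 − dim 𝔫_x = l−1. -/
open Matrix

noncomputable section

noncomputable section StabProof

open Module

def iotaT (p q : ℕ) := {pr : Fin p × Fin q // (pr.1 : ℕ) + (pr.2 : ℕ) + 2 ≠ p + 1}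

instance (p q : ℕ) : Fintype (iotaT p q) := Subtype.fintype _

instance (p q : ℕ) : AddCommGroup (iotaT p q → ℝ) := by infer_instance

lemma card_iotaT {p q : ℕ} (hq : 1 ≤ q) (hpq : q ≤ p) :
    Fintype.card (iotaT p q) = p * q - q := by
  have e : Fintype.card {pr : Fin p × Fin q // (pr.1 : ℕ) + (pr.2 : ℕ) + 2 = p + 1} = q := by
    refine (Fintype.card_congr ?_).trans (Fintype.card_fin q)
    exact {
      toFun := fun pr => pr.1.2
      invFun := fun m => ⟨(⟨p - 1 - (m : ℕ), by have := m.isLt; omega⟩, m), by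
        have := m.isLt; simp; omega⟩
      left_inv := fun pr => by
        obtain ⟨⟨a, b⟩, h⟩ := pr
        have ha := a.isLt; have hb := b.isLt
        have h' : (a : ℕ) + (b : ℕ) + 2 = p + 1 := h
        apply Subtype.ext
        show (_, b) = (a, b)
        have : (⟨p - 1 - (b : ℕ), by omega⟩ : Fin p) = a := by
          apply Fin.ext
          show p - 1 - (b : ℕ) = (a : ℕ)
          omega
        rw [this]
      right_inv := fun m => rfl }
  have h2 : Fintype.card (iotaT p q)
      = Fintype.card (Fin p × Fin q)
        - Fintype.card {pr : Fin p × Fin q // (pr.1 : ℕ) + (pr.2 : ℕ) + 2 = p + 1} :=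
    Fintype.card_subtype_compl _
  rw [h2, e, Fintype.card_prod, Fintype.card_fin, Fintype.card_fin]

end StabProof

section Bpart

variable {p q : ℕ}

/-- 1-based B-block entry built from free parameters (anti-diagonal forced to 0). -/
def Bfun (g : iotaT p q → ℝ) (r m : ℕ) : ℝ :=
  if h : 1 ≤ r ∧ r ≤ p ∧ 1 ≤ m ∧ m ≤ q ∧ r + m ≠ p + 1 then
    g ⟨(⟨r - 1, by omega⟩, ⟨m - 1, by omega⟩), by simp; omega⟩ else 0

/-- 1-based entry of the matrix associated to the parameters `g`. -/
def Ffun (g : iotaT p q → ℝ) (r c : ℕ) : ℝ :=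
  if r ≤ p then
    if c ≤ p then
      (if p - q < c ∧ r < c then Bfun g r (p + 1 - c) else 0)
      - (if p - q < r ∧ c < r then Bfun g c (p + 1 - r) else 0)
    else Bfun g r (c - p)
  else
    if c ≤ p then Bfun g c (r - p)
    else
      (if r < c then - Bfun g (p + 1 - (r - p)) (c - p) else 0)
      + (if c < r then Bfun g (p + 1 - (c - p)) (r - p) else 0)

lemma Bfun_add (g h : iotaT p q → ℝ) (r m : ℕ) :
    Bfun (g + h) r m = Bfun g r m + Bfun h r m := by
  unfold Bfun; split <;> simp <;> rfl

lemma Bfun_smul (c : ℝ) (g : iotaT p q → ℝ) (r m : ℕ) :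
    Bfun (c • g) r m = c * Bfun g r m := by
  unfold Bfun; split <;> simp <;> rfl

lemma Ffun_add (g h : iotaT p q → ℝ) (r c : ℕ) :
    Ffun (g + h) r c = Ffun g r c + Ffun h r c := by
  unfold Ffun; split_ifs <;> simp [Bfun_add] <;> ring

lemma Ffun_smul (c : ℝ) (g : iotaT p q → ℝ) (r c' : ℕ) :
    Ffun (c • g) r c' = c * Ffun g r c' := by
  unfold Ffun; split_ifs <;> simp [Bfun_smul] <;> ring

/-- The parametrization of `𝔫` as a linear map. -/
def Phi (p q : ℕ) : (iotaT p q → ℝ) →ₗ[ℝ] Matrix (Fin (p + q)) (Fin (p + q)) ℝ where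
  toFun g := Matrix.of fun r c => Ffun g ((r : ℕ) + 1) ((c : ℕ) + 1)
  map_add' g h := by ext r c; simp [Ffun_add]
  map_smul' c g := by ext r c; simp [Ffun_smul]

lemma Phi_apply (g : iotaT p q → ℝ) (r c : Fin (p + q)) :
    Phi p q g r c = Ffun g ((r : ℕ) + 1) ((c : ℕ) + 1) := rfl

-- entry lemmas
lemma Phi_B (g : iotaT p q → ℝ) (r c : Fin (p + q)) (hr : (r : ℕ) < p) (hc : p ≤ (c : ℕ)) :
    Phi p q g r c = Bfun g ((r : ℕ) + 1) ((c : ℕ) - p + 1) := by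
  rw [Phi_apply, Ffun, if_pos (by omega), if_neg (by omega)]
  congr 1
  omega

lemma Phi_Bt (g : iotaT p q → ℝ) (r c : Fin (p + q)) (hr : p ≤ (r : ℕ)) (hc : (c : ℕ) < p) :
    Phi p q g r c = Bfun g ((c : ℕ) + 1) ((r : ℕ) - p + 1) := by
  rw [Phi_apply, Ffun, if_neg (by omega), if_pos (by omega)]
  congr 1
  omega

lemma Phi_A (g : iotaT p q → ℝ) (r c : Fin (p + q)) (hr : (r : ℕ) < p) (hc : (c : ℕ) < p) :
    Phi p q g r c =
      (if p - q ≤ (c : ℕ) ∧ (r : ℕ) < (c : ℕ) then Bfun g ((r : ℕ) + 1) (p - (c : ℕ)) else 0)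
      - (if p - q ≤ (r : ℕ) ∧ (c : ℕ) < (r : ℕ) then Bfun g ((c : ℕ) + 1) (p - (r : ℕ)) else 0) := by
  rw [Phi_apply, Ffun, if_pos (by omega), if_pos (by omega)]
  have e1 : p + 1 - ((c : ℕ) + 1) = p - (c : ℕ) := by omega
  have e2 : p + 1 - ((r : ℕ) + 1) = p - (r : ℕ) := by omega
  rw [e1, e2]
  congr 1
  · apply if_congr _ rfl rfl; constructor <;> intro h <;> exact ⟨by omega, by omega⟩
  · apply if_congr _ rfl rfl; constructor <;> intro h <;> exact ⟨by omega, by omega⟩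

lemma Phi_D (g : iotaT p q → ℝ) (r c : Fin (p + q)) (hr : p ≤ (r : ℕ)) (hc : p ≤ (c : ℕ)) :
    Phi p q g r c =
      (if (r : ℕ) < (c : ℕ) then - Bfun g (2 * p - (r : ℕ)) ((c : ℕ) - p + 1) else 0)
      + (if (c : ℕ) < (r : ℕ) then Bfun g (2 * p - (c : ℕ)) ((r : ℕ) - p + 1) else 0) := by
  rw [Phi_apply, Ffun, if_neg (by omega), if_neg (by omega)]
  have e1 : p + 1 - ((r : ℕ) + 1 - p) = 2 * p - (r : ℕ) := by omega
  have e2 : p + 1 - ((c : ℕ) + 1 - p) = 2 * p - (c : ℕ) := by omega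
  have e3 : (c : ℕ) + 1 - p = (c : ℕ) - p + 1 := by omega
  have e4 : (r : ℕ) + 1 - p = (r : ℕ) - p + 1 := by omega
  rw [e1, e2, e3, e4]
  congr 1
  · apply if_congr _ rfl rfl; omega
  · apply if_congr _ rfl rfl; omega

lemma Phi_injective (p q : ℕ) : Function.Injective (Phi p q) := by
  rw [injective_iff_map_eq_zero]
  intro g hg
  funext idx
  obtain ⟨⟨a, b⟩, h⟩ := idx
  have ha := a.isLt; have hb := b.isLt
  have h' : (a : ℕ) + (b : ℕ) + 2 ≠ p + 1 := h
  have : Phi p q g (⟨(a : ℕ), by omega⟩ : Fin (p + q)) (⟨p + (b : ℕ), by omega⟩ : Fin (p + q))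
      = 0 := by rw [hg]; rfl
  rw [Phi_B g _ _ (by simpa using ha) (by simp)] at this
  rw [Bfun] at this
  rw [dif_pos (by simp; omega)] at this
  show g _ = 0
  rw [← this]
  apply congrArg; apply Subtype.ext; apply Prod.ext <;> apply Fin.ext <;> simp <;> omega

lemma mem_soSet_iff {p q : ℕ} (X : Matrix (Fin (p + q)) (Fin (p + q)) ℝ) :
    X ∈ soSet p q ↔ ∀ r c : Fin (p + q),
      X c r * (if (c : ℕ) < p then (1 : ℝ) else -1)
        + (if (r : ℕ) < p then (1 : ℝ) else -1) * X r c = 0 := by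
  unfold soSet Jmat
  rw [Set.mem_setOf_eq, ← Matrix.ext_iff]
  simp only [Matrix.add_apply, Matrix.mul_diagonal, Matrix.diagonal_mul,
    Matrix.transpose_apply, Matrix.zero_apply]

lemma Phi_mem_so {p q : ℕ} (g : iotaT p q → ℝ) : Phi p q g ∈ soSet p q := by
  rw [mem_soSet_iff]
  intro r c
  rcases lt_or_ge (r : ℕ) p with hr | hr <;> rcases lt_or_ge (c : ℕ) p with hc | hc
  · rw [Phi_A g r c hr hc, Phi_A g c r hc hr, if_pos hr, if_pos hc]; ring
  · rw [Phi_B g r c hr hc, Phi_Bt g c r hc hr, if_neg (by omega), if_pos hr]; ring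
  · rw [Phi_Bt g r c hr hc, Phi_B g c r hc hr, if_pos hc, if_neg (by omega)]; ring
  · rw [Phi_D g r c hr hc, Phi_D g c r hc hr, if_neg (show ¬((c : ℕ) < p) by omega),
      if_neg (show ¬((r : ℕ) < p) by omega)]
    split_ifs <;> ring

lemma ent_Phi {p q : ℕ} (g : iotaT p q → ℝ) (i j : ℕ) (hi1 : 1 ≤ i) (hi2 : i ≤ p + q)
    (hj1 : 1 ≤ j) (hj2 : j ≤ p + q) : ent (Phi p q g) i j = Ffun g i j := by
  rw [ent, dif_pos (by omega : i - 1 < p + q ∧ j - 1 < p + q)]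
  show Ffun g (i - 1 + 1) (j - 1 + 1) = Ffun g i j
  congr 1 <;> omega

lemma Phi_mem_nSet {p q : ℕ} (hq : 1 ≤ q) (hpq : q ≤ p) (g : iotaT p q → ℝ) :
    Phi p q g ∈ nSet p q := by
  refine ⟨Phi_mem_so g, ?_, ?_, ?_, ?_, ?_⟩
  · intro i j hi1 hi2 hj1 hj2
    rw [ent_Phi g i j (by omega) (by omega) (by omega) (by omega), Ffun,
      if_pos (by omega), if_pos (by omega), if_neg (by omega), if_neg (by omega)]
    ring
  · intro l hl1 hl2
    rw [ent_Phi g _ _ (by omega) (by omega) (by omega) (by omega), Ffun,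
      if_pos (by omega), if_neg (by omega)]
    have e : p + l - p = l := by omega
    rw [e, Bfun, dif_neg (by omega)]
  · intro k m hk1 hk2 hm1 hm2
    rw [ent_Phi g _ _ (by omega) (by omega) (by omega) (by omega),
      ent_Phi g _ _ (by omega) (by omega) (by omega) (by omega), Ffun,
      if_pos (by omega), if_pos (by omega), if_pos (by omega), if_neg (by omega)]
    rw [Ffun, if_pos (by omega), if_neg (by omega)]
    have e1 : p + 1 - (p - m + 1) = m := by omega
    have e2 : p + m - p = m := by omega
    rw [e1, e2]
    ring
  · intro i j hi1 hij hj2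
    rw [ent_Phi g _ _ (by omega) (by omega) (by omega) (by omega),
      ent_Phi g _ _ (by omega) (by omega) (by omega) (by omega), Ffun,
      if_pos (by omega), if_pos (by omega), if_pos (by omega), if_neg (by omega)]
    rw [Ffun, if_pos (by omega), if_neg (by omega)]
    have e1 : p + 1 - (p + 1 - i) = i := by omega
    have e2 : p + i - p = i := by omega
    rw [e1, e2]
    ring
  · intro i j hi1 hij hj2
    rw [ent_Phi g _ _ (by omega) (by omega) (by omega) (by omega),
      ent_Phi g _ _ (by omega) (by omega) (by omega) (by omega), Ffun,
      if_neg (by omega), if_neg (by omega), if_pos (by omega), if_neg (by omega)]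
    rw [Ffun, if_pos (by omega), if_neg (by omega)]
    have e1 : p + 1 - (p + i - p) = p + 1 - i := by omega
    have e2 : p + j - p = j := by omega
    rw [e1, e2]
    ring

lemma ent_mk {n : ℕ} (X : Matrix (Fin n) (Fin n) ℝ) (i j a b : ℕ) (ha : a < n) (hb : b < n)
    (hia : i = a + 1) (hjb : j = b + 1) : ent X i j = X ⟨a, ha⟩ ⟨b, hb⟩ := by
  subst hia hjb
  rw [ent, dif_pos (by omega : a + 1 - 1 < n ∧ b + 1 - 1 < n)]
  rfl

/-- Read off the free parameters of a matrix. -/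
def gOf {p q : ℕ} (X : Matrix (Fin (p + q)) (Fin (p + q)) ℝ) (c : iotaT p q) : ℝ :=
  X ⟨(c.1.1 : ℕ), by have := c.1.1.isLt; omega⟩ ⟨p + (c.1.2 : ℕ), by have := c.1.2.isLt; omega⟩

lemma Bfun_gOf {p q : ℕ} (hq : 1 ≤ q) (hpq : q ≤ p)
    {X : Matrix (Fin (p + q)) (Fin (p + q)) ℝ} (hX : X ∈ nSet p q)
    {r m : ℕ} (a b : ℕ) (ha : a < p + q) (hb : b < p + q)
    (hr1 : 1 ≤ r) (hr2 : r ≤ p) (hm1 : 1 ≤ m) (hm2 : m ≤ q)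
    (hea : a = r - 1) (heb : b = p + m - 1) :
    Bfun (gOf X) r m = X ⟨a, ha⟩ ⟨b, hb⟩ := by
  by_cases hd : r + m = p + 1
  · rw [Bfun, dif_neg (by omega)]
    have h2 := hX.2.2.1 m hm1 hm2
    rw [ent_mk X (p - m + 1) (p + m) a b ha hb (by omega) (by omega)] at h2
    exact h2.symm
  · rw [Bfun, dif_pos (by simp; omega)]
    show X _ _ = X _ _
    congr 1 <;> exact Fin.ext (by simp; omega)

lemma Phi_gOf {p q : ℕ} (hq : 1 ≤ q) (hpq : q ≤ p)
    {X : Matrix (Fin (p + q)) (Fin (p + q)) ℝ} (hX : X ∈ nSet p q) :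
    Phi p q (gOf X) = X := by
  obtain ⟨hso, h1, h2, h3, h4, h5⟩ := hX
  have hX' : X ∈ nSet p q := ⟨hso, h1, h2, h3, h4, h5⟩
  have sk := (mem_soSet_iff X).1 hso
  have skA : ∀ r c : Fin (p + q), (r : ℕ) < p → (c : ℕ) < p → X c r = - X r c := by
    intro r c hr hc
    have := sk r c
    rw [if_pos hr, if_pos hc] at this
    linarith
  have skB : ∀ r c : Fin (p + q), p ≤ (r : ℕ) → (c : ℕ) < p → X r c = X c r := by
    intro r c hr hc
    have := sk r c
    rw [if_pos hc, if_neg (by omega)] at this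
    linarith
  have skD : ∀ r c : Fin (p + q), p ≤ (r : ℕ) → p ≤ (c : ℕ) → X c r = - X r c := by
    intro r c hr hc
    have := sk r c
    rw [if_neg (by omega), if_neg (by omega)] at this
    linarith
  have diag : ∀ r c : Fin (p + q), (r : ℕ) = (c : ℕ) → X r c = 0 := by
    intro r c hrc
    have he : r = c := Fin.ext hrc
    rcases lt_or_ge (r : ℕ) p with hr | hr
    · have := skA r c hr (by omega)
      rw [he] at this ⊢
      linarith
    · have := skD r c hr (by omega)
      rw [he] at this ⊢
      linarith
  have upper0 : ∀ (a b : Fin (p + q)) (hab : (a : ℕ) < (b : ℕ)) (hb : (b : ℕ) < p - q),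
      X a b = 0 := by
    intro a b hab hb
    have h := h1 ((a : ℕ) + 1) ((b : ℕ) + 1) (by omega) (by omega) (by omega) (by omega)
    rwa [ent_mk X ((a : ℕ) + 1) ((b : ℕ) + 1) (a : ℕ) (b : ℕ) (by omega) (by omega)
      (by omega) (by omega)] at h
  have upper1 : ∀ (a b : Fin (p + q)) (hab : (a : ℕ) < (b : ℕ)) (hb : (b : ℕ) < p)
      (hbq : p - q ≤ (b : ℕ)),
      X a b = X ⟨(a : ℕ), by omega⟩ ⟨2 * p - (b : ℕ) - 1, by omega⟩ := by
    intro a b hab hb hbq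
    rcases lt_or_ge (a : ℕ) (p - q) with ha | ha
    · have h := h3 ((a : ℕ) + 1) (p - (b : ℕ)) (by omega) (by omega) (by omega) (by omega)
      rwa [ent_mk X ((a : ℕ) + 1) (p - (p - (b : ℕ)) + 1) (a : ℕ) (b : ℕ) (by omega) (by omega)
          (by omega) (by omega),
        ent_mk X ((a : ℕ) + 1) (p + (p - (b : ℕ))) (a : ℕ) (2 * p - (b : ℕ) - 1) (by omega)
          (by omega) (by omega) (by omega)] at h
    · have h := h4 (p - (b : ℕ)) (p - (a : ℕ)) (by omega) (by omega) (by omega)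
      rwa [ent_mk X (p + 1 - (p - (a : ℕ))) (p + 1 - (p - (b : ℕ))) (a : ℕ) (b : ℕ) (by omega)
          (by omega) (by omega) (by omega),
        ent_mk X (p + 1 - (p - (a : ℕ))) (p + (p - (b : ℕ))) (a : ℕ) (2 * p - (b : ℕ) - 1)
          (by omega) (by omega) (by omega) (by omega)] at h
  have upperD : ∀ (a b : Fin (p + q)) (ha : p ≤ (a : ℕ)) (hab : (a : ℕ) < (b : ℕ)),
      X a b = - X ⟨2 * p - (a : ℕ) - 1, by omega⟩ b := by
    intro a b ha hab
    have hb := b.isLt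
    have h := h5 ((a : ℕ) - p + 1) ((b : ℕ) - p + 1) (by omega) (by omega) (by omega)
    rwa [ent_mk X (p + ((a : ℕ) - p + 1)) (p + ((b : ℕ) - p + 1)) (a : ℕ) (b : ℕ) (by omega)
        (by omega) (by omega) (by omega),
      ent_mk X (p + 1 - ((a : ℕ) - p + 1)) (p + ((b : ℕ) - p + 1)) (2 * p - (a : ℕ) - 1) (b : ℕ)
        (by omega) (by omega) (by omega) (by omega)] at h
  funext r c
  show Ffun (gOf X) ((r : ℕ) + 1) ((c : ℕ) + 1) = X r c
  have hrlt := r.isLt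
  have hclt := c.isLt
  rcases lt_or_ge (r : ℕ) p with hr | hr <;> rcases lt_or_ge (c : ℕ) p with hc | hc
  · -- A block
    rw [show Ffun (gOf X) ((r : ℕ) + 1) ((c : ℕ) + 1) = Phi p q (gOf X) r c from rfl,
      Phi_A _ r c hr hc]
    rcases Nat.lt_trichotomy (r : ℕ) (c : ℕ) with hrc | hrc | hrc
    · rw [if_neg (show ¬(p - q ≤ (r : ℕ) ∧ (c : ℕ) < (r : ℕ)) by omega), sub_zero]
      rcases lt_or_ge (c : ℕ) (p - q) with hcq | hcq
      · rw [if_neg (show ¬(p - q ≤ (c : ℕ) ∧ (r : ℕ) < (c : ℕ)) by omega),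
          upper0 r c hrc hcq]
      · rw [if_pos (show p - q ≤ (c : ℕ) ∧ (r : ℕ) < (c : ℕ) by omega),
          Bfun_gOf hq hpq hX' (r : ℕ) (2 * p - (c : ℕ) - 1) (by omega) (by omega)
            (by omega) (by omega) (by omega) (by omega) (by omega) (by omega),
          upper1 r c hrc hc hcq]
    · rw [if_neg (by omega), if_neg (by omega), diag r c hrc]
      ring
    · rw [if_neg (show ¬(p - q ≤ (c : ℕ) ∧ (r : ℕ) < (c : ℕ)) by omega), zero_sub]
      have hXrc : X r c = - X c r := by rw [skA r c hr hc]; ring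
      rcases lt_or_ge (r : ℕ) (p - q) with hrq | hrq
      · rw [if_neg (show ¬(p - q ≤ (r : ℕ) ∧ (c : ℕ) < (r : ℕ)) by omega),
          hXrc, upper0 c r hrc hrq]
      · rw [if_pos (show p - q ≤ (r : ℕ) ∧ (c : ℕ) < (r : ℕ) by omega),
          Bfun_gOf hq hpq hX' (c : ℕ) (2 * p - (r : ℕ) - 1) (by omega) (by omega)
            (by omega) (by omega) (by omega) (by omega) (by omega) (by omega),
          hXrc, upper1 c r hrc hr hrq]
  · -- B block
    rw [show Ffun (gOf X) ((r : ℕ) + 1) ((c : ℕ) + 1) = Phi p q (gOf X) r c from rfl,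
      Phi_B _ r c hr hc,
      Bfun_gOf hq hpq hX' (r : ℕ) (c : ℕ) (by omega) (by omega) (by omega) (by omega)
        (by omega) (by omega) (by omega) (by omega)]
  · -- Bt block
    rw [show Ffun (gOf X) ((r : ℕ) + 1) ((c : ℕ) + 1) = Phi p q (gOf X) r c from rfl,
      Phi_Bt _ r c hr hc,
      Bfun_gOf hq hpq hX' (c : ℕ) (r : ℕ) (by omega) (by omega) (by omega) (by omega)
        (by omega) (by omega) (by omega) (by omega), skB r c hr hc]
  · -- D block
    rw [show Ffun (gOf X) ((r : ℕ) + 1) ((c : ℕ) + 1) = Phi p q (gOf X) r c from rfl,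
      Phi_D _ r c hr hc]
    rcases Nat.lt_trichotomy (r : ℕ) (c : ℕ) with hrc | hrc | hrc
    · rw [if_pos hrc, if_neg (show ¬((c : ℕ) < (r : ℕ)) by omega), add_zero,
        Bfun_gOf hq hpq hX' (2 * p - (r : ℕ) - 1) (c : ℕ) (by omega) (by omega)
          (by omega) (by omega) (by omega) (by omega) (by omega) (by omega),
        upperD r c hr hrc]
    · rw [if_neg (by omega), if_neg (by omega), diag r c hrc]
      ring
    · rw [if_neg (show ¬((r : ℕ) < (c : ℕ)) by omega), if_pos hrc, zero_add,
        Bfun_gOf hq hpq hX' (2 * p - (c : ℕ) - 1) (r : ℕ) (by omega) (by omega)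
          (by omega) (by omega) (by omega) (by omega) (by omega) (by omega)]
      have hXrc : X r c = - X c r := by rw [skD r c hr hc]; ring
      rw [hXrc, upperD c r hc hrc, neg_neg]

lemma range_Phi {p q : ℕ} (hq : 1 ≤ q) (hpq : q ≤ p) :
    LinearMap.range (Phi p q) = nSub p q := by
  apply le_antisymm
  · rintro X ⟨g, rfl⟩
    exact Phi_mem_nSet hq hpq g
  · intro X hX
    exact ⟨gOf X, Phi_gOf hq hpq hX⟩

section Rows

variable {p q : ℕ}

def topF (i : Fin q) : Fin (p + q) := ⟨p + (i : ℕ), by have := i.isLt; omega⟩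

def midF (i : Fin q) : Fin (p + q) := ⟨p - 1 - (i : ℕ), by have := i.isLt; omega⟩

@[simp] lemma topF_val (i : Fin q) : ((topF i : Fin (p + q)) : ℕ) = p + (i : ℕ) := rfl

@[simp] lemma midF_val (i : Fin q) : ((midF i : Fin (p + q)) : ℕ) = p - 1 - (i : ℕ) := rfl

lemma vent_eq {n : ℕ} (x : Fin n → ℝ) (k a : ℕ) (ha : a < n) (hk : k = a + 1) :
    vent x k = x ⟨a, ha⟩ := by
  subst hk
  rw [vent, dif_pos (by omega : a + 1 - 1 < n)]
  rfl

lemma x_decomp (hq : 1 ≤ q) (hpq : q ≤ p) (x : Fin (p + q) → ℝ)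
    (hzero1 : ∀ j, 1 ≤ j → j ≤ p - q → vent x j = 0)
    (hzero2 : ∀ i, 1 ≤ i → i ≤ q → vent x (p - i + 1) + vent x (p + i) = 0) :
    x = ∑ i : Fin q, x (topF i) • (Pi.single (topF i) (1 : ℝ) - Pi.single (midF i) (1 : ℝ)) := by
  funext c
  have hclt := c.isLt
  rw [Finset.sum_apply]
  simp only [Pi.smul_apply, Pi.sub_apply, Pi.single_apply, smul_eq_mul]
  rcases lt_or_ge (c : ℕ) (p - q) with hc | hc
  · have hxc : x c = 0 := by
      have h := hzero1 ((c : ℕ) + 1) (by omega) (by omega)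
      rw [vent_eq x _ (c : ℕ) c.isLt rfl] at h
      exact h
    rw [hxc]
    refine (Finset.sum_eq_zero ?_).symm
    intro i _
    have hi := i.isLt
    rw [if_neg (fun h => by
        have h2 : (c : ℕ) = p + (i : ℕ) := congrArg Fin.val h
        omega),
      if_neg (fun h => by
        have h2 : (c : ℕ) = p - 1 - (i : ℕ) := congrArg Fin.val h
        omega)]
    ring
  · rcases lt_or_ge (c : ℕ) p with hcp | hcp
    · rw [Finset.sum_eq_single (⟨p - 1 - (c : ℕ), by omega⟩ : Fin q)]
      · rw [if_neg (fun h => by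
            have h2 : (c : ℕ) = p + (p - 1 - (c : ℕ)) := congrArg Fin.val h
            omega),
          if_pos (Fin.ext (show (c : ℕ) = p - 1 - (p - 1 - (c : ℕ)) by omega))]
        have h2 := hzero2 (p - 1 - (c : ℕ) + 1) (by omega) (by omega)
        rw [vent_eq x _ (c : ℕ) c.isLt (by omega),
          vent_eq x _ (p + (p - 1 - (c : ℕ))) (by omega) (by omega)] at h2
        have h3 : x (topF (⟨p - 1 - (c : ℕ), by omega⟩ : Fin q))
            = x ⟨p + (p - 1 - (c : ℕ)), by omega⟩ := rfl
        rw [h3]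
        linarith
      · intro i _ hi
        have hilt := i.isLt
        rw [if_neg (fun h => by
            have h2 : (c : ℕ) = p + (i : ℕ) := congrArg Fin.val h
            omega),
          if_neg (fun h => by
            have h2 : (c : ℕ) = p - 1 - (i : ℕ) := congrArg Fin.val h
            exact hi (Fin.ext (show (i : ℕ) = p - 1 - (c : ℕ) by omega)))]
        ring
      · intro h
        exact absurd (Finset.mem_univ _) h
    · rw [Finset.sum_eq_single (⟨(c : ℕ) - p, by omega⟩ : Fin q)]
      · rw [if_pos (Fin.ext (show (c : ℕ) = p + ((c : ℕ) - p) by omega)),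
          if_neg (fun h => by
            have h2 : (c : ℕ) = p - 1 - ((c : ℕ) - p) := congrArg Fin.val h
            omega)]
        have h3 : x (topF (⟨(c : ℕ) - p, by omega⟩ : Fin q))
            = x c := by
          congr 1
          exact Fin.ext (show p + ((c : ℕ) - p) = (c : ℕ) by omega)
        rw [h3]
        ring
      · intro i _ hi
        have hilt := i.isLt
        rw [if_neg (fun h => by
            have h2 : (c : ℕ) = p + (i : ℕ) := congrArg Fin.val h
            exact hi (Fin.ext (show (i : ℕ) = (c : ℕ) - p by omega))),
          if_neg (fun h => by
            have h2 : (c : ℕ) = p - 1 - (i : ℕ) := congrArg Fin.val h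
            omega)]
        ring
      · intro h
        exact absurd (Finset.mem_univ _) h

lemma mulVec_x (hq : 1 ≤ q) (hpq : q ≤ p) (x : Fin (p + q) → ℝ)
    (hzero1 : ∀ j, 1 ≤ j → j ≤ p - q → vent x j = 0)
    (hzero2 : ∀ i, 1 ≤ i → i ≤ q → vent x (p - i + 1) + vent x (p + i) = 0)
    (X : Matrix (Fin (p + q)) (Fin (p + q)) ℝ) :
    X *ᵥ x = fun r => ∑ i : Fin q, x (topF i) * (X r (topF i) - X r (midF i)) := by
  conv_lhs => rw [x_decomp hq hpq x hzero1 hzero2]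
  rw [show X *ᵥ (∑ i : Fin q, x (topF i) • (Pi.single (topF i) (1 : ℝ)
      - Pi.single (midF i) (1 : ℝ)))
      = X.mulVecLin (∑ i : Fin q, x (topF i) • (Pi.single (topF i) (1 : ℝ)
      - Pi.single (midF i) (1 : ℝ))) from rfl, map_sum]
  funext r
  rw [Finset.sum_apply]
  congr 1
  funext i
  rw [_root_.map_smul, _root_.map_sub]
  simp only [Matrix.mulVecLin_apply, Matrix.mulVec_single_one, Pi.smul_apply, Pi.sub_apply,
    smul_eq_mul, mul_one, Matrix.col_apply]

end Rows

section RowLemmas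

variable {p q : ℕ}

lemma Bfun_antidiag (g : iotaT p q → ℝ) {r m : ℕ} (h : r + m = p + 1) : Bfun g r m = 0 := by
  rw [Bfun, dif_neg (by omega)]

lemma Phi_top (g : iotaT p q → ℝ) (r : Fin (p + q)) (hr : (r : ℕ) < p) (i : Fin q) :
    Phi p q g r (topF i) = Bfun g ((r : ℕ) + 1) ((i : ℕ) + 1) := by
  have hi := i.isLt
  rw [Phi_B g r (topF i) hr (by rw [topF_val]; omega), topF_val]
  congr 1 <;> omega

lemma Phi_low_mid (hq : 1 ≤ q) (hpq : q ≤ p) (g : iotaT p q → ℝ) (r : Fin (p + q))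
    (hr : (r : ℕ) < p - q) (i : Fin q) :
    Phi p q g r (midF i) = Bfun g ((r : ℕ) + 1) ((i : ℕ) + 1) := by
  have hi := i.isLt
  rw [Phi_A g r (midF i) (by omega) (by rw [midF_val]; omega), midF_val,
    if_pos (show p - q ≤ p - 1 - (i : ℕ) ∧ (r : ℕ) < p - 1 - (i : ℕ) by omega),
    if_neg (show ¬(p - q ≤ (r : ℕ) ∧ p - 1 - (i : ℕ) < (r : ℕ)) by omega), sub_zero]
  congr 1 <;> omega

lemma Phi_mid_top (hq : 1 ≤ q) (hpq : q ≤ p) (g : iotaT p q → ℝ) (j i : Fin q) :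
    Phi p q g (midF j) (topF i) = Bfun g (p - (j : ℕ)) ((i : ℕ) + 1) := by
  have hj := j.isLt
  rw [Phi_top g (midF j) (by rw [midF_val]; omega) i, midF_val]
  congr 1 <;> omega

lemma Phi_mid_mid_lt (hq : 1 ≤ q) (hpq : q ≤ p) (g : iotaT p q → ℝ) (j i : Fin q)
    (hij : (i : ℕ) < (j : ℕ)) :
    Phi p q g (midF j) (midF i) = Bfun g (p - (j : ℕ)) ((i : ℕ) + 1) := by
  have hj := j.isLt; have hi := i.isLt
  rw [Phi_A g (midF j) (midF i) (by rw [midF_val]; omega) (by rw [midF_val]; omega),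
    midF_val, midF_val,
    if_pos (show p - q ≤ p - 1 - (i : ℕ) ∧ p - 1 - (j : ℕ) < p - 1 - (i : ℕ) by omega),
    if_neg (show ¬(p - q ≤ p - 1 - (j : ℕ) ∧ p - 1 - (i : ℕ) < p - 1 - (j : ℕ)) by omega),
    sub_zero]
  congr 1 <;> omega

lemma Phi_mid_mid_eq (hq : 1 ≤ q) (hpq : q ≤ p) (g : iotaT p q → ℝ) (j i : Fin q)
    (hij : (i : ℕ) = (j : ℕ)) :
    Phi p q g (midF j) (midF i) = 0 := by
  have hj := j.isLt; have hi := i.isLt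
  rw [Phi_A g (midF j) (midF i) (by rw [midF_val]; omega) (by rw [midF_val]; omega),
    midF_val, midF_val,
    if_neg (show ¬(p - q ≤ p - 1 - (i : ℕ) ∧ p - 1 - (j : ℕ) < p - 1 - (i : ℕ)) by omega),
    if_neg (show ¬(p - q ≤ p - 1 - (j : ℕ) ∧ p - 1 - (i : ℕ) < p - 1 - (j : ℕ)) by omega)]
  ring

lemma Phi_mid_mid_gt (hq : 1 ≤ q) (hpq : q ≤ p) (g : iotaT p q → ℝ) (j i : Fin q)
    (hij : (j : ℕ) < (i : ℕ)) :
    Phi p q g (midF j) (midF i) = - Bfun g (p - (i : ℕ)) ((j : ℕ) + 1) := by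
  have hj := j.isLt; have hi := i.isLt
  rw [Phi_A g (midF j) (midF i) (by rw [midF_val]; omega) (by rw [midF_val]; omega),
    midF_val, midF_val,
    if_neg (show ¬(p - q ≤ p - 1 - (i : ℕ) ∧ p - 1 - (j : ℕ) < p - 1 - (i : ℕ)) by omega),
    if_pos (show p - q ≤ p - 1 - (j : ℕ) ∧ p - 1 - (i : ℕ) < p - 1 - (j : ℕ) by omega),
    zero_sub]
  congr 2 <;> omega

lemma Phi_top_mid (hq : 1 ≤ q) (hpq : q ≤ p) (g : iotaT p q → ℝ) (j i : Fin q) :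
    Phi p q g (topF j) (midF i) = Bfun g (p - (i : ℕ)) ((j : ℕ) + 1) := by
  have hj := j.isLt; have hi := i.isLt
  rw [Phi_Bt g (topF j) (midF i) (by rw [topF_val]; omega) (by rw [midF_val]; omega),
    topF_val, midF_val]
  congr 1 <;> omega

lemma Phi_top_top_lt (hq : 1 ≤ q) (hpq : q ≤ p) (g : iotaT p q → ℝ) (j i : Fin q)
    (hij : (i : ℕ) < (j : ℕ)) :
    Phi p q g (topF j) (topF i) = Bfun g (p - (i : ℕ)) ((j : ℕ) + 1) := by
  have hj := j.isLt; have hi := i.isLt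
  rw [Phi_D g (topF j) (topF i) (by rw [topF_val]; omega) (by rw [topF_val]; omega),
    topF_val, topF_val,
    if_neg (show ¬(p + (j : ℕ) < p + (i : ℕ)) by omega),
    if_pos (show p + (i : ℕ) < p + (j : ℕ) by omega), zero_add]
  congr 1 <;> omega

lemma Phi_top_top_eq (hq : 1 ≤ q) (hpq : q ≤ p) (g : iotaT p q → ℝ) (j i : Fin q)
    (hij : (i : ℕ) = (j : ℕ)) :
    Phi p q g (topF j) (topF i) = 0 := by
  have hj := j.isLt; have hi := i.isLt
  rw [Phi_D g (topF j) (topF i) (by rw [topF_val]; omega) (by rw [topF_val]; omega),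
    topF_val, topF_val,
    if_neg (show ¬(p + (j : ℕ) < p + (i : ℕ)) by omega),
    if_neg (show ¬(p + (i : ℕ) < p + (j : ℕ)) by omega)]
  ring

lemma Phi_top_top_gt (hq : 1 ≤ q) (hpq : q ≤ p) (g : iotaT p q → ℝ) (j i : Fin q)
    (hij : (j : ℕ) < (i : ℕ)) :
    Phi p q g (topF j) (topF i) = - Bfun g (p - (j : ℕ)) ((i : ℕ) + 1) := by
  have hj := j.isLt; have hi := i.isLt
  rw [Phi_D g (topF j) (topF i) (by rw [topF_val]; omega) (by rw [topF_val]; omega),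
    topF_val, topF_val,
    if_pos (show p + (j : ℕ) < p + (i : ℕ) by omega),
    if_neg (show ¬(p + (i : ℕ) < p + (j : ℕ)) by omega), add_zero]
  congr 2 <;> omega

variable (x : Fin (p + q) → ℝ)

lemma rowsum_low (hq : 1 ≤ q) (hpq : q ≤ p) (g : iotaT p q → ℝ) (r : Fin (p + q))
    (hr : (r : ℕ) < p - q) :
    ∑ i : Fin q, x (topF i) * (Phi p q g r (topF i) - Phi p q g r (midF i)) = 0 := by
  apply Finset.sum_eq_zero
  intro i _
  rw [Phi_top g r (by omega) i, Phi_low_mid hq hpq g r hr i]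
  ring

lemma rowsum_mid_eqform (hq : 1 ≤ q) (hpq : q ≤ p) (g : iotaT p q → ℝ) (j : Fin q) :
    ∑ i : Fin q, x (topF i) * (Phi p q g (midF j) (topF i) - Phi p q g (midF j) (midF i))
    = ∑ i : Fin q, x (topF i) * (if (j : ℕ) < (i : ℕ) then
        Bfun g (p - (j : ℕ)) ((i : ℕ) + 1) + Bfun g (p - (i : ℕ)) ((j : ℕ) + 1) else 0) := by
  apply Finset.sum_congr rfl
  intro i _
  have hj := j.isLt; have hi := i.isLt
  rcases Nat.lt_trichotomy (i : ℕ) (j : ℕ) with hij | hij | hij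
  · rw [Phi_mid_top hq hpq g j i, Phi_mid_mid_lt hq hpq g j i hij, if_neg (by omega)]
    ring
  · rw [Phi_mid_top hq hpq g j i, Phi_mid_mid_eq hq hpq g j i hij, if_neg (by omega),
      Bfun_antidiag g (show p - (j : ℕ) + ((i : ℕ) + 1) = p + 1 by omega)]
    ring
  · rw [Phi_mid_top hq hpq g j i, Phi_mid_mid_gt hq hpq g j i hij, if_pos (by omega)]
    ring

lemma rowsum_top_eq_neg_mid (hq : 1 ≤ q) (hpq : q ≤ p) (g : iotaT p q → ℝ) (j : Fin q) :
    ∑ i : Fin q, x (topF i) * (Phi p q g (topF j) (topF i) - Phi p q g (topF j) (midF i))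
    = - ∑ i : Fin q, x (topF i) * (Phi p q g (midF j) (topF i) - Phi p q g (midF j) (midF i)) := by
  have h : ∑ i : Fin q,
      (x (topF i) * (Phi p q g (topF j) (topF i) - Phi p q g (topF j) (midF i))
        + x (topF i) * (Phi p q g (midF j) (topF i) - Phi p q g (midF j) (midF i))) = 0 := by
    apply Finset.sum_eq_zero
    intro i _
    have hj := j.isLt; have hi := i.isLt
    rcases Nat.lt_trichotomy (i : ℕ) (j : ℕ) with hij | hij | hij
    · rw [Phi_top_top_lt hq hpq g j i hij, Phi_top_mid hq hpq g j i,
        Phi_mid_top hq hpq g j i, Phi_mid_mid_lt hq hpq g j i hij]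
      ring
    · rw [Phi_top_top_eq hq hpq g j i hij, Phi_top_mid hq hpq g j i,
        Phi_mid_top hq hpq g j i, Phi_mid_mid_eq hq hpq g j i hij,
        Bfun_antidiag g (show p - (i : ℕ) + ((j : ℕ) + 1) = p + 1 by omega),
        Bfun_antidiag g (show p - (j : ℕ) + ((i : ℕ) + 1) = p + 1 by omega)]
      ring
    · rw [Phi_top_top_gt hq hpq g j i hij, Phi_top_mid hq hpq g j i,
        Phi_mid_top hq hpq g j i, Phi_mid_mid_gt hq hpq g j i hij]
      ring
  rw [Finset.sum_add_distrib] at h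
  linarith

lemma rowsum_mid_zero (hq : 1 ≤ q) (hpq : q ≤ p) {l : ℕ} (hl1 : 1 ≤ l) (hl2 : l ≤ q)
    (hlmax : ∀ j, l < j → j ≤ q → vent x (p + j) = 0)
    (g : iotaT p q → ℝ) (j : Fin q) (hj : l ≤ (j : ℕ) + 1) :
    ∑ i : Fin q, x (topF i) * (Phi p q g (midF j) (topF i) - Phi p q g (midF j) (midF i)) = 0 := by
  rw [rowsum_mid_eqform x hq hpq g j]
  apply Finset.sum_eq_zero
  intro i _
  have hi := i.isLt
  rcases lt_or_ge (j : ℕ) (i : ℕ) with hij | hij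
  · have ht : x (topF i) = 0 := by
      have h := hlmax ((i : ℕ) + 1) (by omega) (by omega)
      rwa [vent_eq x _ (p + (i : ℕ)) (by omega) (by omega)] at h
    rw [ht, zero_mul]
  · rw [if_neg (by omega), mul_zero]

end RowLemmas

section Maps

variable {p q : ℕ}

def Lx {n : ℕ} (x : Fin n → ℝ) : Matrix (Fin n) (Fin n) ℝ →ₗ[ℝ] (Fin n → ℝ) where
  toFun X := X *ᵥ x
  map_add' X Y := Matrix.add_mulVec X Y x
  map_smul' c X := Matrix.smul_mulVec c X x

def psiM (p q : ℕ) (x : Fin (p + q) → ℝ) :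
    (iotaT p q → ℝ) →ₗ[ℝ] (Fin (p + q) → ℝ) := (Lx x).comp (Phi p q)

def jIdx (p q l : ℕ) (hl2 : l ≤ q) (j : Fin (l - 1)) : Fin q :=
  ⟨(j : ℕ), by have := j.isLt; omega⟩

def EqM (p q l : ℕ) (hl2 : l ≤ q) (x : Fin (p + q) → ℝ) :
    (iotaT p q → ℝ) →ₗ[ℝ] (Fin (l - 1) → ℝ) :=
  (LinearMap.funLeft ℝ ℝ (fun j => midF (jIdx p q l hl2 j))).comp (psiM p q x)

lemma psiM_apply (x : Fin (p + q) → ℝ) (hq : 1 ≤ q) (hpq : q ≤ p)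
    (hzero1 : ∀ j, 1 ≤ j → j ≤ p - q → vent x j = 0)
    (hzero2 : ∀ i, 1 ≤ i → i ≤ q → vent x (p - i + 1) + vent x (p + i) = 0)
    (g : iotaT p q → ℝ) (r : Fin (p + q)) :
    psiM p q x g r
      = ∑ i : Fin q, x (topF i) * (Phi p q g r (topF i) - Phi p q g r (midF i)) := by
  show (Phi p q g *ᵥ x) r = _
  rw [mulVec_x hq hpq x hzero1 hzero2]

lemma ker_psi_eq (x : Fin (p + q) → ℝ) (hq : 1 ≤ q) (hpq : q ≤ p)
    (hzero1 : ∀ j, 1 ≤ j → j ≤ p - q → vent x j = 0)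
    (hzero2 : ∀ i, 1 ≤ i → i ≤ q → vent x (p - i + 1) + vent x (p + i) = 0)
    {l : ℕ} (hl1 : 1 ≤ l) (hl2 : l ≤ q)
    (hlmax : ∀ j, l < j → j ≤ q → vent x (p + j) = 0) :
    LinearMap.ker (psiM p q x) = LinearMap.ker (EqM p q l hl2 x) := by
  ext g
  simp only [LinearMap.mem_ker]
  constructor
  · intro h
    rw [EqM, LinearMap.comp_apply, h, map_zero]
  · intro h
    have hmid : ∀ j : Fin q, psiM p q x g (midF j) = 0 := by
      intro j
      have hjlt := j.isLt
      rcases lt_or_ge ((j : ℕ) + 1) l with hjl | hjl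
      · have he : (midF j : Fin (p + q)) = midF (jIdx p q l hl2 ⟨(j : ℕ), by omega⟩) := by
          rfl
        rw [he]
        exact congrFun h ⟨(j : ℕ), by omega⟩
      · rw [psiM_apply x hq hpq hzero1 hzero2 g (midF j)]
        exact rowsum_mid_zero x hq hpq hl1 hl2 hlmax g j hjl
    funext r
    show psiM p q x g r = 0
    have hrlt := r.isLt
    rcases lt_or_ge (r : ℕ) (p - q) with h1 | h1
    · rw [psiM_apply x hq hpq hzero1 hzero2 g r]
      exact rowsum_low x hq hpq g r h1
    rcases lt_or_ge (r : ℕ) p with h2 | h2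
    · have he : r = midF (⟨p - 1 - (r : ℕ), by omega⟩ : Fin q) :=
        Fin.ext (show (r : ℕ) = p - 1 - (p - 1 - (r : ℕ)) by omega)
      rw [he]
      exact hmid _
    · have he : r = topF (⟨(r : ℕ) - p, by omega⟩ : Fin q) :=
        Fin.ext (show (r : ℕ) = p + ((r : ℕ) - p) by omega)
      rw [he, psiM_apply x hq hpq hzero1 hzero2 g _,
        rowsum_top_eq_neg_mid x hq hpq g _]
      have hm := hmid (⟨(r : ℕ) - p, by omega⟩ : Fin q)
      rw [psiM_apply x hq hpq hzero1 hzero2 g _] at hm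
      rw [hm, neg_zero]

end Maps

section Gspec

def gspec (p q l : ℕ) (tl : ℝ) (v : Fin (l - 1) → ℝ) : iotaT p q → ℝ := fun c =>
  if h : (c.1.2 : ℕ) + 1 = l ∧ p + 1 ≤ (c.1.1 : ℕ) + l then
    v ⟨p - 1 - (c.1.1 : ℕ), by have := c.1.1.isLt; omega⟩ / tl else 0

lemma Bfun_gspec_ne {p q l : ℕ} (tl : ℝ) (v : Fin (l - 1) → ℝ) {r m : ℕ} (hm1 : 1 ≤ m)
    (hm : m ≠ l) : Bfun (gspec p q l tl v) r m = 0 := by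
  rw [Bfun]
  split
  · unfold gspec; rw [dif_neg (fun hcon => by
      have h1 : m - 1 + 1 = l := hcon.1
      omega)]
  · rfl

lemma Bfun_gspec_hit {p q : ℕ} (hq : 1 ≤ q) (hpq : q ≤ p) {l : ℕ} (hl2 : l ≤ q) (tl : ℝ)
    (v : Fin (l - 1) → ℝ) (j0 : ℕ) (hj0 : j0 + 2 ≤ l) :
    Bfun (gspec p q l tl v) (p - j0) l = v ⟨j0, by omega⟩ / tl := by
  rw [Bfun, dif_pos (by omega : 1 ≤ p - j0 ∧ p - j0 ≤ p ∧ 1 ≤ l ∧ l ≤ q ∧ p - j0 + l ≠ p + 1)]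
  unfold gspec; rw [dif_pos (⟨show l - 1 + 1 = l by omega, show p + 1 ≤ p - j0 - 1 + l by omega⟩ :
    _ ∧ _)]
  congr 1
  apply congrArg
  apply Fin.ext
  show p - 1 - (p - j0 - 1) = j0
  omega

lemma EqM_surj {p q : ℕ} (x : Fin (p + q) → ℝ) (hq : 1 ≤ q) (hpq : q ≤ p)
    (hzero1 : ∀ j, 1 ≤ j → j ≤ p - q → vent x j = 0)
    (hzero2 : ∀ i, 1 ≤ i → i ≤ q → vent x (p - i + 1) + vent x (p + i) = 0)
    {l : ℕ} (hl1 : 1 ≤ l) (hl2 : l ≤ q) (hlne : vent x (p + l) ≠ 0) :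
    Function.Surjective (EqM p q l hl2 x) := by
  intro v
  have hiLlt : l - 1 < q := by omega
  set iL : Fin q := ⟨l - 1, hiLlt⟩ with hiLdef
  have hiLval : (iL : ℕ) = l - 1 := rfl
  set tl := x (topF iL) with htl
  have htlne : tl ≠ 0 := by
    have h := hlne
    rwa [vent_eq x (p + l) (p + (l - 1)) (by omega) (by omega)] at h
  refine ⟨gspec p q l tl v, ?_⟩
  funext j
  have hjlt := j.isLt
  show psiM p q x (gspec p q l tl v) (midF (jIdx p q l hl2 j)) = v j
  have hjqval : ((jIdx p q l hl2 j) : ℕ) = (j : ℕ) := rfl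
  rw [psiM_apply x hq hpq hzero1 hzero2 _ _,
    rowsum_mid_eqform x hq hpq _ (jIdx p q l hl2 j)]
  rw [Finset.sum_eq_single iL]
  · rw [if_pos (show ((jIdx p q l hl2 j) : ℕ) < (iL : ℕ) by omega)]
    rw [show (iL : ℕ) + 1 = l by omega, hjqval,
      Bfun_gspec_hit hq hpq hl2 tl v (j : ℕ) (by omega),
      Bfun_gspec_ne tl v (by omega) (show (j : ℕ) + 1 ≠ l by omega), add_zero]
    rw [show v ⟨(j : ℕ), by omega⟩ = v j from rfl]
    field_simp
    rw [htl]; ring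
  · intro i _ hi
    have hilt := i.isLt
    have hne : (i : ℕ) + 1 ≠ l := fun h => hi (Fin.ext (by omega))
    rw [Bfun_gspec_ne tl v (by omega) hne,
      Bfun_gspec_ne tl v (by omega) (show ((jIdx p q l hl2 j) : ℕ) + 1 ≠ l by omega),
      add_zero, ite_self, mul_zero]
  · intro h
    exact absurd (Finset.mem_univ _) h

end Gspec

end Bpart

end


/-- Let `x ≠ 0` with `x^j = 0` for all `1 ≤ j ≤ p-q` and
`x^{p-i+1} + x^{p+i} = 0` for all `1 ≤ i ≤ q`, and let `l` be the largest index in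
`{1, ..., q}` with `x^{p+l} ≠ 0`. Then `dim 𝔫_x = q(p-1) - (l-1)`; equivalently,
`dim 𝔫 - dim 𝔫_x = l-1`. -/
theorem nSub_stabilizer_dim_case3 (p q : ℕ) (hq : 1 ≤ q) (hpq : q ≤ p)
    (x : Fin (p + q) → ℝ) (hx : x ≠ 0)
    (hzero1 : ∀ j, 1 ≤ j → j ≤ p - q → vent x j = 0)
    (hzero2 : ∀ i, 1 ≤ i → i ≤ q → vent x (p - i + 1) + vent x (p + i) = 0)
    (l : ℕ) (hl1 : 1 ≤ l) (hl2 : l ≤ q) (hlne : vent x (p + l) ≠ 0)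
    (hlmax : ∀ j, l < j → j ≤ q → vent x (p + j) = 0) :
    Module.finrank ℝ ↥(nSub p q ⊓ kerAt x) = q * (p - 1) - (l - 1) ∧
    Module.finrank ℝ ↥(nSub p q) - Module.finrank ℝ ↥(nSub p q ⊓ kerAt x) = l - 1 := by
  classical
  have hinj := Phi_injective p q
  have hrange := range_Phi hq hpq
  have hdom : Module.finrank ℝ (iotaT p q → ℝ) = p * q - q := by
    rw [Module.finrank_pi, card_iotaT hq hpq]
  have hdimN : Module.finrank ℝ ↥(nSub p q) = p * q - q := by
    rw [← hrange, LinearMap.finrank_range_of_inj hinj, hdom]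
  have hmap : Submodule.map (Phi p q) (LinearMap.ker (psiM p q x)) = nSub p q ⊓ kerAt x := by
    ext X
    simp only [Submodule.mem_map, LinearMap.mem_ker, Submodule.mem_inf]
    constructor
    · rintro ⟨g, hg, rfl⟩
      refine ⟨?_, ?_⟩
      · rw [← hrange]
        exact ⟨g, rfl⟩
      · show Phi p q g *ᵥ x = 0
        exact hg
    · rintro ⟨hX1, hX2⟩
      have hXr : X ∈ LinearMap.range (Phi p q) := by rw [hrange]; exact hX1
      obtain ⟨g, rfl⟩ := hXr
      exact ⟨g, hX2, rfl⟩
  have hdimKer : Module.finrank ℝ ↥(nSub p q ⊓ kerAt x)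
      = Module.finrank ℝ ↥(LinearMap.ker (psiM p q x)) := by
    rw [← hmap]
    exact (LinearEquiv.finrank_eq (Submodule.equivMapOfInjective (Phi p q) hinj _)).symm
  have hker2 := ker_psi_eq x hq hpq hzero1 hzero2 hl1 hl2 hlmax
  have hsurj := EqM_surj x hq hpq hzero1 hzero2 hl1 hl2 hlne
  have hrn := LinearMap.finrank_range_add_finrank_ker (EqM p q l hl2 x)
  rw [LinearMap.range_eq_top.mpr hsurj, finrank_top, Module.finrank_pi, Fintype.card_fin,
    hdom] at hrn
  have hKerVal : Module.finrank ℝ ↥(LinearMap.ker (psiM p q x)) = p * q - q - (l - 1) := by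
    rw [hker2]
    omega
  have hmul : q * (p - 1) = p * q - q := by
    obtain ⟨k, rfl⟩ : ∃ k, p = k + 1 := ⟨p - 1, by omega⟩
    rw [Nat.succ_sub_one, Nat.succ_mul, Nat.add_sub_cancel, Nat.mul_comm]
  constructor
  · rw [hdimKer, hKerVal, hmul]
  · rw [hdimN, hdimKer, hKerVal]
    omega
end

section
/- Let 𝔭 := {X ∈ 𝔰𝔬(p,q) : Xᵀ = X}. Then 𝔞 ⊆ 𝔭, any two elements of 𝔞 commute (XY = YX for all X, Y ∈ 𝔞), and 𝔞 is a maximal abelian subspace of 𝔭: every Y ∈ 𝔭 satisfying XY = YX for all X ∈ 𝔞 belongs to 𝔞. -/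
open Matrix

section AuxProof

open Matrix

lemma ent_eq' {n : ℕ} (X : Matrix (Fin n) (Fin n) ℝ) (i j : ℕ) (hi : i - 1 < n) (hj : j - 1 < n) :
    ent X i j = X ⟨i - 1, hi⟩ ⟨j - 1, hj⟩ := by
  unfold ent; rw [dif_pos ⟨hi, hj⟩]

lemma ent_succ {n : ℕ} (X : Matrix (Fin n) (Fin n) ℝ) (i j : Fin n) :
    ent X ((i : ℕ) + 1) ((j : ℕ) + 1) = X i j := by
  rw [ent_eq' X _ _ (by simpa using i.isLt) (by simpa using j.isLt)]
  simp [Nat.add_sub_cancel]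

lemma aSet_apply_ne {p q : ℕ} (hq : 1 ≤ q) (hpq : q ≤ p)
    {X : Matrix (Fin (p + q)) (Fin (p + q)) ℝ} (hX : X ∈ aSet p q)
    {i j : Fin (p + q)} (h : (i : ℕ) + (j : ℕ) ≠ 2 * p - 1) : X i j = 0 := by
  have hi := i.isLt; have hj := j.isLt
  have h2 := hX.2 ((i : ℕ) + 1) ((j : ℕ) + 1) (by omega) (by omega) (by omega) (by omega)
    (by rintro ⟨l, hl1, hl2, (⟨e1, e2⟩ | ⟨e1, e2⟩)⟩ <;> omega)
  rwa [ent_succ] at h2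

lemma aSet_pair {p q : ℕ} (hq : 1 ≤ q) (hpq : q ≤ p)
    {X : Matrix (Fin (p + q)) (Fin (p + q)) ℝ} (hX : X ∈ aSet p q)
    {u v : Fin (p + q)} (hu : (u : ℕ) < p) (hv : p ≤ (v : ℕ))
    (huv : (u : ℕ) + (v : ℕ) = 2 * p - 1) : X u v = X v u := by
  have hu2 := u.isLt; have hv2 := v.isLt
  have hl := hX.1 ((v : ℕ) - p + 1) (by omega) (by omega)
  rw [ent_eq' _ _ _ (by omega) (by omega), ent_eq' _ _ _ (by omega) (by omega)] at hl
  convert hl using 2 <;> exact Fin.ext (by simp only [Fin.val_mk]; omega)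

lemma aSet_symm {p q : ℕ} (hq : 1 ≤ q) (hpq : q ≤ p)
    {X : Matrix (Fin (p + q)) (Fin (p + q)) ℝ} (hX : X ∈ aSet p q)
    (i j : Fin (p + q)) : X i j = X j i := by
  have hi := i.isLt; have hj := j.isLt
  by_cases h : (i : ℕ) + (j : ℕ) = 2 * p - 1
  · rcases lt_or_ge (i : ℕ) p with hip | hip
    · exact aSet_pair hq hpq hX hip (by omega) h
    · exact (aSet_pair hq hpq hX (show (j : ℕ) < p by omega) (by omega) (by omega)).symm
  · rw [aSet_apply_ne hq hpq hX h, aSet_apply_ne hq hpq hX (by omega)]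

lemma aSet_sub_pSet {p q : ℕ} (hq : 1 ≤ q) (hpq : q ≤ p) : aSet p q ⊆ pSet p q := by
  intro X hX
  have hsym : Xᵀ = X := by
    ext a b; rw [Matrix.transpose_apply]; exact aSet_symm hq hpq hX b a
  refine ⟨?_, hsym⟩
  show Xᵀ * Jmat p q + Jmat p q * X = 0
  rw [hsym]
  ext a b
  have ha := a.isLt; have hb := b.isLt
  rw [Matrix.add_apply, Matrix.zero_apply]
  unfold Jmat
  rw [Matrix.mul_diagonal, Matrix.diagonal_mul]
  rcases lt_or_ge (a : ℕ) p with h1 | h1 <;> rcases lt_or_ge (b : ℕ) p with h2 | h2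
  · rw [aSet_apply_ne hq hpq hX (by omega)]; simp
  · rw [if_neg (by omega), if_pos h1]; ring
  · rw [if_pos h2, if_neg (by omega)]; ring
  · rw [aSet_apply_ne hq hpq hX (by omega)]; simp

lemma aSet_mul_comm {p q : ℕ} (hq : 1 ≤ q) (hpq : q ≤ p)
    {X Y : Matrix (Fin (p + q)) (Fin (p + q)) ℝ}
    (hX : X ∈ aSet p q) (hY : Y ∈ aSet p q) : X * Y = Y * X := by
  ext a b
  rw [Matrix.mul_apply, Matrix.mul_apply]
  have ha := a.isLt; have hb := b.isLt
  by_cases hrow : (a : ℕ) + q < p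
  · rw [Finset.sum_eq_zero, Finset.sum_eq_zero]
    · intro k _; have hk := k.isLt
      rw [aSet_apply_ne hq hpq hY (by omega), zero_mul]
    · intro k _; have hk := k.isLt
      rw [aSet_apply_ne hq hpq hX (by omega), zero_mul]
  · have hk0lt : 2 * p - 1 - (a : ℕ) < p + q := by omega
    set k0 : Fin (p + q) := ⟨2 * p - 1 - (a : ℕ), hk0lt⟩ with hk0
    have hk0v : (k0 : ℕ) = 2 * p - 1 - (a : ℕ) := rfl
    have e1 : ∑ k, X a k * Y k b = X a k0 * Y k0 b := by
      refine Finset.sum_eq_single_of_mem k0 (Finset.mem_univ _) (fun k _ hk => ?_)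
      have hkv : (k : ℕ) ≠ (k0 : ℕ) := fun h => hk (Fin.ext h)
      have hk2 := k.isLt
      rw [aSet_apply_ne hq hpq hX (by omega), zero_mul]
    have e2 : ∑ k, Y a k * X k b = Y a k0 * X k0 b := by
      refine Finset.sum_eq_single_of_mem k0 (Finset.mem_univ _) (fun k _ hk => ?_)
      have hkv : (k : ℕ) ≠ (k0 : ℕ) := fun h => hk (Fin.ext h)
      have hk2 := k.isLt
      rw [aSet_apply_ne hq hpq hY (by omega), zero_mul]
    rw [e1, e2]
    by_cases hba : b = a
    · subst hba
      rw [aSet_symm hq hpq hX k0 b, aSet_symm hq hpq hY k0 b]; ring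
    · have hba' : (b : ℕ) ≠ (a : ℕ) := fun h => hba (Fin.ext h)
      rw [aSet_apply_ne hq hpq hY (show (k0 : ℕ) + (b : ℕ) ≠ 2 * p - 1 by omega),
        aSet_apply_ne hq hpq hX (show (k0 : ℕ) + (b : ℕ) ≠ 2 * p - 1 by omega),
        mul_zero, mul_zero]

/-- Test matrix: `1` at positions `(p-l, p+l-1)` and `(p+l-1, p-l)` (0-based), else `0`. -/
def Hmat (p q l : ℕ) : Matrix (Fin (p + q)) (Fin (p + q)) ℝ :=
  Matrix.of fun a b =>
    if ((a : ℕ) = p - l ∧ (b : ℕ) = p + l - 1) ∨ ((a : ℕ) = p + l - 1 ∧ (b : ℕ) = p - l)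
    then 1 else 0

lemma Hmat_apply (p q l : ℕ) (a b : Fin (p + q)) :
    Hmat p q l a b =
      if ((a : ℕ) = p - l ∧ (b : ℕ) = p + l - 1) ∨ ((a : ℕ) = p + l - 1 ∧ (b : ℕ) = p - l)
      then 1 else 0 := rfl

lemma Hmat_mem_aSet {p q l : ℕ} (hq : 1 ≤ q) (hpq : q ≤ p) (hl1 : 1 ≤ l) (hl2 : l ≤ q) :
    Hmat p q l ∈ aSet p q := by
  constructor
  · intro l' hl'1 hl'2
    rw [ent_eq' _ _ _ (by omega) (by omega), ent_eq' _ _ _ (by omega) (by omega),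
      Hmat_apply, Hmat_apply]
    simp only [Fin.val_mk]
    split_ifs with h1 h2 h2 <;> first | rfl | omega
  · intro i j hi1 hi2 hj1 hj2 hne
    rw [ent_eq' _ _ _ (by omega) (by omega), Hmat_apply]
    simp only [Fin.val_mk]
    rw [if_neg]
    rintro (⟨e1, e2⟩ | ⟨e1, e2⟩)
    · exact hne ⟨l, hl1, hl2, Or.inl ⟨by omega, by omega⟩⟩
    · exact hne ⟨l, hl1, hl2, Or.inr ⟨by omega, by omega⟩⟩

lemma Hmat_mul_apply {p q l : ℕ} (hq : 1 ≤ q) (hpq : q ≤ p) (hl1 : 1 ≤ l) (hl2 : l ≤ q)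
    (Y : Matrix (Fin (p + q)) (Fin (p + q)) ℝ) (a b : Fin (p + q)) :
    (Hmat p q l * Y) a b =
      (if (a : ℕ) = p - l then Y ⟨p + l - 1, by omega⟩ b else 0) +
      (if (a : ℕ) = p + l - 1 then Y ⟨p - l, by omega⟩ b else 0) := by
  rw [Matrix.mul_apply]
  by_cases ha1 : (a : ℕ) = p - l
  · rw [if_pos ha1, if_neg (by omega), add_zero]
    calc ∑ k, Hmat p q l a k * Y k b
        = Hmat p q l a ⟨p + l - 1, by omega⟩ * Y ⟨p + l - 1, by omega⟩ b := by
          refine Finset.sum_eq_single_of_mem _ (Finset.mem_univ _) (fun k _ hk => ?_)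
          rw [Hmat_apply, if_neg, zero_mul]
          rintro (⟨e1, e2⟩ | ⟨e1, e2⟩)
          · exact hk (Fin.ext (by simp only [Fin.val_mk]; omega))
          · omega
      _ = Y ⟨p + l - 1, by omega⟩ b := by
          rw [Hmat_apply, if_pos (Or.inl ⟨ha1, rfl⟩), one_mul]
  · by_cases ha2 : (a : ℕ) = p + l - 1
    · rw [if_neg ha1, if_pos ha2, zero_add]
      calc ∑ k, Hmat p q l a k * Y k b
          = Hmat p q l a ⟨p - l, by omega⟩ * Y ⟨p - l, by omega⟩ b := by
            refine Finset.sum_eq_single_of_mem _ (Finset.mem_univ _) (fun k _ hk => ?_)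
            rw [Hmat_apply, if_neg, zero_mul]
            rintro (⟨e1, e2⟩ | ⟨e1, e2⟩)
            · omega
            · exact hk (Fin.ext (by simp only [Fin.val_mk]; omega))
        _ = Y ⟨p - l, by omega⟩ b := by
            rw [Hmat_apply, if_pos (Or.inr ⟨ha2, rfl⟩), one_mul]
    · rw [if_neg ha1, if_neg ha2, add_zero]
      refine Finset.sum_eq_zero (fun k _ => ?_)
      rw [Hmat_apply, if_neg, zero_mul]
      rintro (⟨e1, e2⟩ | ⟨e1, e2⟩) <;> omega

lemma mul_Hmat_apply {p q l : ℕ} (hq : 1 ≤ q) (hpq : q ≤ p) (hl1 : 1 ≤ l) (hl2 : l ≤ q)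
    (Y : Matrix (Fin (p + q)) (Fin (p + q)) ℝ) (a b : Fin (p + q)) :
    (Y * Hmat p q l) a b =
      (if (b : ℕ) = p + l - 1 then Y a ⟨p - l, by omega⟩ else 0) +
      (if (b : ℕ) = p - l then Y a ⟨p + l - 1, by omega⟩ else 0) := by
  rw [Matrix.mul_apply]
  by_cases hb1 : (b : ℕ) = p + l - 1
  · rw [if_pos hb1, if_neg (by omega), add_zero]
    calc ∑ k, Y a k * Hmat p q l k b
        = Y a ⟨p - l, by omega⟩ * Hmat p q l ⟨p - l, by omega⟩ b := by
          refine Finset.sum_eq_single_of_mem _ (Finset.mem_univ _) (fun k _ hk => ?_)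
          rw [Hmat_apply, if_neg, mul_zero]
          rintro (⟨e1, e2⟩ | ⟨e1, e2⟩)
          · exact hk (Fin.ext (by simp only [Fin.val_mk]; omega))
          · omega
      _ = Y a ⟨p - l, by omega⟩ := by
          rw [Hmat_apply, if_pos (Or.inl ⟨rfl, hb1⟩), mul_one]
  · by_cases hb2 : (b : ℕ) = p - l
    · rw [if_neg hb1, if_pos hb2, zero_add]
      calc ∑ k, Y a k * Hmat p q l k b
          = Y a ⟨p + l - 1, by omega⟩ * Hmat p q l ⟨p + l - 1, by omega⟩ b := by
            refine Finset.sum_eq_single_of_mem _ (Finset.mem_univ _) (fun k _ hk => ?_)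
            rw [Hmat_apply, if_neg, mul_zero]
            rintro (⟨e1, e2⟩ | ⟨e1, e2⟩)
            · omega
            · exact hk (Fin.ext (by simp only [Fin.val_mk]; omega))
        _ = Y a ⟨p + l - 1, by omega⟩ := by
            rw [Hmat_apply, if_pos (Or.inr ⟨rfl, hb2⟩), mul_one]
    · rw [if_neg hb1, if_neg hb2, add_zero]
      refine Finset.sum_eq_zero (fun k _ => ?_)
      rw [Hmat_apply, if_neg, mul_zero]
      rintro (⟨e1, e2⟩ | ⟨e1, e2⟩) <;> omega

lemma pSet_symm {p q : ℕ} {Y : Matrix (Fin (p + q)) (Fin (p + q)) ℝ}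
    (hY : Y ∈ pSet p q) (a b : Fin (p + q)) : Y a b = Y b a := by
  have h := congrFun (congrFun hY.2 a) b
  rw [Matrix.transpose_apply] at h
  exact h.symm

lemma pSet_block {p q : ℕ} (hq : 1 ≤ q) (hpq : q ≤ p)
    {Y : Matrix (Fin (p + q)) (Fin (p + q)) ℝ} (hY : Y ∈ pSet p q)
    {a b : Fin (p + q)} (h : ((a : ℕ) < p ↔ (b : ℕ) < p)) : Y a b = 0 := by
  have h0 : Yᵀ * Jmat p q + Jmat p q * Y = 0 := hY.1
  have h1 : (Yᵀ * Jmat p q + Jmat p q * Y) a b = (0 : Matrix (Fin (p + q)) (Fin (p + q)) ℝ) a b := by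
    rw [h0]
  rw [Matrix.add_apply, Matrix.zero_apply] at h1
  unfold Jmat at h1
  rw [Matrix.mul_diagonal, Matrix.diagonal_mul, Matrix.transpose_apply] at h1
  rw [pSet_symm hY b a] at h1
  by_cases hb : (b : ℕ) < p
  · rw [if_pos hb, if_pos (h.2 hb)] at h1; linarith
  · rw [if_neg hb, if_neg (fun ha => hb (h.1 ha))] at h1; linarith

lemma key_mixed {p q : ℕ} (hq : 1 ≤ q) (hpq : q ≤ p)
    {Y : Matrix (Fin (p + q)) (Fin (p + q)) ℝ} (hY : Y ∈ pSet p q)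
    (hcomm : ∀ X ∈ aSet p q, X * Y = Y * X) {a b : Fin (p + q)}
    (ha : (a : ℕ) < p) (hb : p ≤ (b : ℕ)) (hab : (a : ℕ) + (b : ℕ) ≠ 2 * p - 1) :
    Y a b = 0 := by
  have ha2 := a.isLt; have hb2 := b.isLt
  set l : ℕ := (b : ℕ) - p + 1 with hl
  have hl1 : 1 ≤ l := by omega
  have hl2 : l ≤ q := by omega
  have hH := hcomm _ (Hmat_mem_aSet hq hpq hl1 hl2)
  have hult : p - l < p + q := by omega
  set u : Fin (p + q) := ⟨p - l, hult⟩ with hu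
  have huv : (u : ℕ) = p - l := rfl
  have h1 : (Hmat p q l * Y) a u = (Y * Hmat p q l) a u := by rw [hH]
  rw [Hmat_mul_apply hq hpq hl1 hl2, mul_Hmat_apply hq hpq hl1 hl2] at h1
  have hbfin : ∀ (h : p + l - 1 < p + q), (⟨p + l - 1, h⟩ : Fin (p + q)) = b :=
    fun h => Fin.ext (by simp only [Fin.val_mk]; omega)
  rw [hbfin] at h1
  split_ifs at h1 <;> first | omega | linarith

lemma key_all {p q : ℕ} (hq : 1 ≤ q) (hpq : q ≤ p)
    {Y : Matrix (Fin (p + q)) (Fin (p + q)) ℝ} (hY : Y ∈ pSet p q)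
    (hcomm : ∀ X ∈ aSet p q, X * Y = Y * X) (a b : Fin (p + q))
    (hab : (a : ℕ) + (b : ℕ) ≠ 2 * p - 1) : Y a b = 0 := by
  rcases lt_or_ge (a : ℕ) p with h1 | h1 <;> rcases lt_or_ge (b : ℕ) p with h2 | h2
  · exact pSet_block hq hpq hY (iff_of_true h1 h2)
  · exact key_mixed hq hpq hY hcomm h1 h2 hab
  · rw [pSet_symm hY a b]
    exact key_mixed hq hpq hY hcomm h2 h1 (by omega)
  · exact pSet_block hq hpq hY (iff_of_false (by omega) (by omega))

end AuxProof

/-- With `𝔭 := {X ∈ 𝔰𝔬(p,q) : Xᵀ = X}`, one has `𝔞 ⊆ 𝔭`, any two elements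
of `𝔞` commute, and `𝔞` is a maximal abelian subspace of `𝔭`: every `Y ∈ 𝔭` commuting with
all of `𝔞` belongs to `𝔞`. -/
theorem aSet_maximal_abelian (p q : ℕ) (hq : 1 ≤ q) (hpq : q ≤ p) :
    aSet p q ⊆ pSet p q ∧
    (∀ X ∈ aSet p q, ∀ Y ∈ aSet p q, X * Y = Y * X) ∧
    (∀ Y ∈ pSet p q, (∀ X ∈ aSet p q, X * Y = Y * X) → Y ∈ aSet p q) := by
  refine ⟨aSet_sub_pSet hq hpq, fun X hX Y hY => aSet_mul_comm hq hpq hX hY, ?_⟩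
  intro Y hY hcomm
  constructor
  · intro l hl1 hl2
    rw [ent_eq' _ _ _ (by omega) (by omega), ent_eq' _ _ _ (by omega) (by omega)]
    exact pSet_symm hY _ _
  · intro i j hi1 hi2 hj1 hj2 hne
    rw [ent_eq' _ _ _ (by omega) (by omega)]
    have hab : (i - 1) + (j - 1) ≠ 2 * p - 1 := by
      intro h
      apply hne
      rcases le_or_gt p (j - 1) with hjp | hjp
      · exact ⟨j - 1 - p + 1, by omega, by omega, Or.inl ⟨by omega, by omega⟩⟩
      · exact ⟨i - 1 - p + 1, by omega, by omega, Or.inr ⟨by omega, by omega⟩⟩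
    exact key_all hq hpq hY hcomm ⟨i - 1, by omega⟩ ⟨j - 1, by omega⟩ hab
end
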